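/- arXiv:1810.02945 — 12 statements merged into one kernel-verified Lean document; each statement's English description precedes it below -/
import Mathlib

section
/- Let A, Q be finite nonempty sets, F a clone on A containing a ∂-function (a ternary function ∂ with ∂(x,x,y)=∂(x,y,x)=∂(y,x,x)=x for all x,y), and H ⊆ A^Q a Q-invariant set of F with |H(q)| ≤ 2 for all q ∈ Q. If p,q ∈ Q, a ∈ H(p), and H weakly separates p from q at the point a, then H strongly separates p from q at a. -/
open Function

/-- `f` (an `n`-ary operation on `A`) preserves `H ⊆ A^Q` if `H` is closed under
pointwise application of `f`. -/
def ClPreserves {A Q : Type*} {n : ℕ} (f : (Fin n → A) → A) (H : Set (Q → A)) : Prop :=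
  ∀ h : Fin n → Q → A, (∀ i, h i ∈ H) → (fun q => f fun i => h i q) ∈ H

/-- `H` is a `Q`-invariant set of the family of operations `F`. -/
def ClInvariant {A Q : Type*} (F : ∀ n : ℕ, Set ((Fin n → A) → A)) (H : Set (Q → A)) : Prop :=
  ∀ (n : ℕ) (f : (Fin n → A) → A), f ∈ F n → ClPreserves f H

/-- `F` is a clone: contains all projections and is closed under composition. -/
def IsClone {A : Type*} (F : ∀ n : ℕ, Set ((Fin n → A) → A)) : Prop :=
  (∀ (n : ℕ) (i : Fin n), (fun x => x i) ∈ F n) ∧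
  (∀ (n m : ℕ) (f : (Fin n → A) → A) (g : Fin n → (Fin m → A) → A),
    f ∈ F n → (∀ i, g i ∈ F m) → (fun x => f fun i => g i x) ∈ F m)

/-- Restriction of `h : Q → A` to a subset `P ⊆ Q`. -/
def restrictTo {A Q : Type*} (P : Set Q) (h : Q → A) : P → A := fun x => h x

/-- `H(q) = {h q : h ∈ H}`. -/
def valuesAt {A Q : Type*} (H : Set (Q → A)) (q : Q) : Set A := (fun h => h q) '' H

/-- A ∂-function (majority/discriminator). -/
def IsPartialFn {A : Type*} (f : (Fin 3 → A) → A) : Prop :=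
  ∀ x y : A, f ![x, x, y] = x ∧ f ![x, y, x] = x ∧ f ![y, x, x] = x

/-- Condition Δ^∂. -/
def DeltaPartial {A : Type*} (F : ∀ n : ℕ, Set ((Fin n → A) → A)) : Prop :=
  ∀ a : Fin 3 → A, Function.Injective a → ∀ j : Fin 3,
    ∃ p ∈ F 3, IsPartialFn p ∧ p a = a j

/-- Condition Δ^s_n. -/
def DeltaS {A : Type*} (F : ∀ n : ℕ, Set ((Fin n → A) → A)) (n : ℕ) : Prop :=
  ∃ i : Fin n, ∀ a : Fin n → A, Function.Injective a → ∀ j : Fin n,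
    ∃ s ∈ F n, s a = a j ∧ ∀ x : Fin n → A, ¬ Function.Injective x → s x = x i

/-- Condition Δ^2. -/
def Delta2 {A : Type*} (F : ∀ n : ℕ, Set ((Fin n → A) → A)) : Prop :=
  ∀ a b : Fin 2 → A, Function.Injective a → Function.Injective b →
    Set.range a ≠ Set.range b → ∀ i j : Fin 2,
      ∃ w ∈ F 2, (∀ x : A, w (fun _ => x) = x) ∧ w a = a i ∧ w b = b j

/-- `H` weakly separates `p` from `q` at the point `a`. -/
def WeaklySeparates {A Q : Type*} (H : Set (Q → A)) (p q : Q) (a : A) : Prop :=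
  ∃ h₁ ∈ H, ∃ h₂ ∈ H, h₁ p = a ∧ h₂ p = a ∧ h₁ q ≠ h₂ q

/-- `H` strongly separates `p` from `q` at the point `a`. -/
def StronglySeparates {A Q : Type*} (H : Set (Q → A)) (p q : Q) (a : A) : Prop :=
  ∀ b ∈ valuesAt H q, ∃ h ∈ H, h p = a ∧ h q = b

/-- Every operation in `F` is conservative. -/
def IsConservative {A : Type*} (F : ∀ n : ℕ, Set ((Fin n → A) → A)) : Prop :=
  ∀ (n : ℕ), ∀ f ∈ F n, ∀ a : Fin n → A, f a ∈ Set.range a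

/-- `F` is symmetric: closed under conjugation by permutations of `A`. -/
def IsSymmetric {A : Type*} (F : ∀ n : ℕ, Set ((Fin n → A) → A)) : Prop :=
  ∀ (n : ℕ), ∀ f ∈ F n, ∀ σ : Equiv.Perm A, (fun a : Fin n → A => σ.symm (f (σ ∘ a))) ∈ F n

theorem stmt_4 {A Q : Type*} [Finite A] [Nonempty A] [Finite Q] [Nonempty Q]
    (F : ∀ n : ℕ, Set ((Fin n → A) → A)) (hF : IsClone F)
    (d : (Fin 3 → A) → A) (hdF : d ∈ F 3) (hd : IsPartialFn d)
    (H : Set (Q → A)) (hH : ClInvariant F H)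
    (hcard : ∀ q : Q, (valuesAt H q).ncard ≤ 2)
    (p q : Q) (a : A) (ha : a ∈ valuesAt H p)
    (hw : WeaklySeparates H p q a) :
    StronglySeparates H p q a := by
  obtain ⟨h₁, hh₁, h₂, hh₂, hp₁, hp₂, hne⟩ := hw
  intro b hb
  by_cases hb1 : b = h₁ q
  · exact ⟨h₁, hh₁, hp₁, hb1.symm⟩
  by_cases hb2 : b = h₂ q
  · exact ⟨h₂, hh₂, hp₂, hb2.symm⟩
  exfalso
  have hsub : ({h₁ q, h₂ q, b} : Set A) ⊆ valuesAt H q := by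
    intro x hx
    rcases hx with rfl | rfl | rfl
    · exact ⟨h₁, hh₁, rfl⟩
    · exact ⟨h₂, hh₂, rfl⟩
    · exact hb
  have h3 : ({h₁ q, h₂ q, b} : Set A).ncard = 3 := by
    rw [Set.ncard_insert_of_notMem (by simp [hne, Ne.symm hb1]),
        Set.ncard_insert_of_notMem (by simp [Ne.symm hb2]), Set.ncard_singleton]
  have := Set.ncard_le_ncard hsub (Set.toFinite _)
  have := hcard q
  omega
end

section
/- Let A, Q be finite nonempty sets and F a clone on A satisfying condition Δ^∂ (for every injective triple a_0a_1a_2 in A^3 and every a ∈ {a_0,a_1,a_2}, F contains a ternary ∂-function with ∂(a_0,a_1,a_2)=a, where a ∂-function satisfies ∂(x,x,y)=∂(x,y,x)=∂(y,x,x)=x). Let H ⊆ A^Q be a Q-invariant set of F, p,q ∈ Q, a ∈ H(p). If H weakly separates p from q at a, then H strongly separates p from q at a. -/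
open Function

theorem stmt_5 {A Q : Type*} [Finite A] [Nonempty A] [Finite Q] [Nonempty Q]
    (F : ∀ n : ℕ, Set ((Fin n → A) → A)) (hF : IsClone F) (hΔ : DeltaPartial F)
    (H : Set (Q → A)) (hH : ClInvariant F H)
    (p q : Q) (a : A) (ha : a ∈ valuesAt H p)
    (hw : WeaklySeparates H p q a) :
    StronglySeparates H p q a := by
  obtain ⟨h₁, h₁H, h₂, h₂H, hp1, hp2, hne⟩ := hw
  rintro b ⟨g, gH, rfl⟩
  by_cases hb1 : g q = h₁ q
  · exact ⟨h₁, h₁H, hp1, hb1.symm⟩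
  by_cases hb2 : g q = h₂ q
  · exact ⟨h₂, h₂H, hp2, hb2.symm⟩
  -- triple (h₁ q, h₂ q, g q) is injective
  have hinj : Function.Injective ![h₁ q, h₂ q, g q] := by
    intro i j hij
    fin_cases i <;> fin_cases j <;> simp_all [Matrix.cons_val_zero, Matrix.cons_val_one] <;>
      first
        | rfl
        | (exact absurd hij hne)
        | (exact absurd hij.symm hne)
        | (exact absurd hij.symm hb1)
        | (exact absurd hij hb1)
        | (exact absurd hij.symm hb2)
        | (exact absurd hij hb2)
  obtain ⟨d, dF, dPart, dval⟩ := hΔ ![h₁ q, h₂ q, g q] hinj 2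
  refine ⟨(fun r => d fun i => ![h₁, h₂, g] i r), hH 3 d dF _ ?_, ?_, ?_⟩
  · intro i; fin_cases i <;> simpa
  · have : (fun i => ![h₁, h₂, g] i p) = ![a, a, g p] := by
      funext i; fin_cases i <;> simp [hp1, hp2]
    show d (fun i => ![h₁, h₂, g] i p) = a
    rw [this]; exact (dPart a (g p)).1
  · have : (fun i => ![h₁, h₂, g] i q) = ![h₁ q, h₂ q, g q] := by
      funext i; fin_cases i <;> simp
    show d (fun i => ![h₁, h₂, g] i q) = g q
    rw [this, dval]; rfl
end

section
/- Let A, Q be finite nonempty sets, n ≥ 3 a natural number, and F a clone on A satisfying Δ^s_n. Let H ⊆ A^Q be a Q-invariant set of F, p,q ∈ Q with |H(q)| ≥ n, and a ∈ H(p). If H weakly separates p from q at a, then H strongly separates p from q at a. -/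
open Function

theorem stmt_8 {A Q : Type*} [Finite A] [Nonempty A] [Finite Q] [Nonempty Q]
    (n : ℕ) (hn : 3 ≤ n)
    (F : ∀ n : ℕ, Set ((Fin n → A) → A)) (hF : IsClone F) (hΔ : DeltaS F n)
    (H : Set (Q → A)) (hH : ClInvariant F H)
    (p q : Q) (hq : n ≤ (valuesAt H q).ncard) (a : A) (ha : a ∈ valuesAt H p)
    (hw : WeaklySeparates H p q a) :
    StronglySeparates H p q a := by
  classical
  obtain ⟨i, hi⟩ := hΔ
  obtain ⟨h₁, hh₁, h₂, hh₂, hp₁, hp₂, hne⟩ := hw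
  intro b hb
  set S := valuesAt H q with hS
  -- the triple is inside S
  have hsub : ({h₁ q, h₂ q, b} : Set A) ⊆ S := by
    intro x hx
    rcases hx with rfl | rfl | rfl
    · exact ⟨h₁, hh₁, rfl⟩
    · exact ⟨h₂, hh₂, rfl⟩
    · exact hb
  have hcard3 : ({h₁ q, h₂ q, b} : Set A).ncard ≤ n := by
    calc ({h₁ q, h₂ q, b} : Set A).ncard ≤ 3 := by
          apply le_trans (Set.ncard_insert_le _ _)
          have := Set.ncard_insert_le (h₂ q) ({b} : Set A)
          simpa using Nat.succ_le_succ this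
      _ ≤ n := hn
  obtain ⟨T, hT0, hTS, hTcard⟩ := Set.exists_subsuperset_card_eq hsub hcard3 hq
  -- a bijection Fin n ≃ T
  haveI : Fintype T := Fintype.ofFinite T
  have hcardT : Fintype.card T = n := by
    rw [← Set.toFinset_card, ← Set.ncard_eq_toFinset_card']; exact hTcard
  let e : T ≃ Fin n := Fintype.equivFinOfCardEq hcardT
  let v₀ : Fin n → A := fun k => (e.symm k : A)
  have hv₀inj : Function.Injective v₀ := fun x y hxy => by
    have := Subtype.ext hxy
    simpa using e.symm.injective this
  have hv₀range : Set.range v₀ = T := by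
    ext x
    constructor
    · rintro ⟨k, rfl⟩; exact (e.symm k).2
    · intro hx; exact ⟨e ⟨x, hx⟩, by simp [v₀]⟩
  -- pick i' ≠ i
  have h2lt : (2 : ℕ) < n := lt_of_lt_of_le (by norm_num) hn
  have h0lt : (0 : ℕ) < n := by omega
  have h1lt : (1 : ℕ) < n := by omega
  let i' : Fin n := if i = ⟨0, h0lt⟩ then ⟨1, h1lt⟩ else ⟨0, h0lt⟩
  have hii' : i ≠ i' := by
    by_cases hc : i = ⟨0, h0lt⟩
    · simp only [i', if_pos hc]
      rw [hc]
      intro h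
      exact absurd (congrArg Fin.val h) (by norm_num)
    · simp only [i', if_neg hc]
      exact hc
  -- rearrange v₀ so that position i gets h₁ q and position i' gets h₂ q
  obtain ⟨k₁, hk₁⟩ : h₁ q ∈ Set.range v₀ := hv₀range ▸ hT0 (by simp)
  let v₁ : Fin n → A := v₀ ∘ Equiv.swap i k₁
  have hv₁inj : Function.Injective v₁ := hv₀inj.comp (Equiv.swap i k₁).injective
  have hv₁range : Set.range v₁ = T := by
    rw [← hv₀range]; exact (Equiv.swap i k₁).surjective.range_comp v₀
  have hv₁i : v₁ i = h₁ q := by simp [v₁, Equiv.swap_apply_left, hk₁]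
  obtain ⟨k₂, hk₂⟩ : h₂ q ∈ Set.range v₁ := hv₁range ▸ hT0 (by simp)
  have hk₂i : k₂ ≠ i := by
    intro h; rw [h] at hk₂; exact hne (hv₁i.symm.trans hk₂)
  let v₂ : Fin n → A := v₁ ∘ Equiv.swap i' k₂
  have hv₂inj : Function.Injective v₂ := hv₁inj.comp (Equiv.swap i' k₂).injective
  have hv₂range : Set.range v₂ = T := by
    rw [← hv₁range]; exact (Equiv.swap i' k₂).surjective.range_comp v₁
  have hv₂i' : v₂ i' = h₂ q := by simp [v₂, Equiv.swap_apply_left, hk₂]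
  have hv₂i : v₂ i = h₁ q := by
    have : Equiv.swap i' k₂ i = i := by
      apply Equiv.swap_apply_of_ne_of_ne
      · exact hii'
      · exact fun h => hk₂i h.symm
    simp [v₂, this, hv₁i]
  -- b is in the range of v₂
  obtain ⟨j, hj⟩ : b ∈ Set.range v₂ := hv₂range ▸ hT0 (by simp)
  -- witnesses in H for each value of v₂
  have hwit : ∀ k : Fin n, ∃ g ∈ H, g q = v₂ k := by
    intro k
    have : v₂ k ∈ S := hTS (hv₂range ▸ Set.mem_range_self k)
    obtain ⟨g, hg, hgq⟩ := this
    exact ⟨g, hg, hgq⟩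
  choose w hwH hwq using hwit
  -- the tuple of functions
  let g : Fin n → Q → A := fun k => if k = i then h₁ else if k = i' then h₂ else w k
  have hgH : ∀ k, g k ∈ H := by
    intro k
    by_cases hk : k = i
    · simpa [g, hk] using hh₁
    · by_cases hk' : k = i'
      · simpa [g, hk, hk', Ne.symm hii'] using hh₂
      · simpa [g, hk, hk'] using hwH k
  have hgq : ∀ k, g k q = v₂ k := by
    intro k
    by_cases hk : k = i
    · subst hk; simp [g, hv₂i]
    · by_cases hk' : k = i'
      · subst hk'; simp [g, hk, hv₂i']
      · simp [g, hk, hk', hwq k]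
  -- apply Δ^s_n
  obtain ⟨s, hsF, hs1, hs2⟩ := hi v₂ hv₂inj j
  refine ⟨fun r => s fun k => g k r, hH n s hsF g hgH, ?_, ?_⟩
  · -- value at p
    show s (fun k => g k p) = a
    have hgi : g i p = a := by simp [g, hp₁]
    have hgi' : g i' p = a := by simp [g, Ne.symm hii', hp₂]
    have hnoninj : ¬ Function.Injective (fun k => g k p) := by
      intro hinj
      exact hii' (hinj (by simp [hgi, hgi']))
    rw [hs2 _ hnoninj]
    exact hgi
  · -- value at q
    show s (fun k => g k q) = b
    have hfe : (fun k => g k q) = v₂ := funext hgq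
    rw [hfe, hs1, hj]
end

section
/- Let n ≥ 2 and let F be a clone on a set A satisfying Δ^s_n with witness index i. Then for every index j < n, every injective n-tuple b ∈ A^n, and every b' in the range of b, there is an n-ary function t ∈ F with t(b) = b' and t(x) = x_j for every non-injective n-tuple x ∈ A^n. -/
open Function

theorem stmt_9 {A : Type*} (n : ℕ) (hn : 2 ≤ n)
    (F : ∀ n : ℕ, Set ((Fin n → A) → A)) (hF : IsClone F) (i : Fin n)
    (hΔ : ∀ a : Fin n → A, Function.Injective a → ∀ j : Fin n,
      ∃ s ∈ F n, s a = a j ∧ ∀ x : Fin n → A, ¬ Function.Injective x → s x = x i) :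
    ∀ (j : Fin n) (b : Fin n → A), Function.Injective b → ∀ k : Fin n,
      ∃ t ∈ F n, t b = b k ∧ ∀ x : Fin n → A, ¬ Function.Injective x → t x = x j := by
  intro j b hb k
  set σ : Equiv.Perm (Fin n) := Equiv.swap i j with hσ
  have hbσ : Function.Injective (b ∘ σ) := hb.comp σ.injective
  obtain ⟨s, hsF, hsa, hsni⟩ := hΔ (b ∘ σ) hbσ (σ.symm k)
  refine ⟨fun x => s (fun l => x (σ l)), ?_, ?_, ?_⟩
  · exact hF.2 n n s (fun l x => x (σ l)) hsF (fun l => hF.1 n (σ l))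
  · exact (by simpa using hsa : s (b ∘ σ) = b k)
  · intro x hx
    have hxσ : ¬ Function.Injective (fun l => x (σ l)) := by
      intro h
      exact hx (by
        have : x = (fun l => x (σ l)) ∘ σ.symm := by
          funext l; simp
        rw [this]; exact h.comp σ.symm.injective)
    have := hsni _ hxσ
    simpa [hσ] using this
end

section
/- Let F be a conservative clone on a set A (|A| ≥ 2) such that r(F) ≥ 3 (every binary function in F is a projection). Then for every n-tuple a = (a_0,...,a_{n-1}) ∈ A^n whose range has fewer than r(F) elements, every n-ary f ∈ F, and every map σ: A → A, one has f(σ(a_0),...,σ(a_{n-1})) = σ(f(a_0,...,a_{n-1})). -/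
open Function

theorem stmt_10 {A : Type*} [Nontrivial A]
    (F : ∀ n : ℕ, Set ((Fin n → A) → A)) (hF : IsClone F) (hcons : IsConservative F)
    (r : ℕ) (hr : 3 ≤ r)
    -- r(F) ≥ r : every function in F of arity < r is a projection
    (hproj : ∀ m : ℕ, m < r → ∀ f ∈ F m, ∃ i : Fin m, f = fun x => x i) :
    ∀ (n : ℕ) (a : Fin n → A), (Set.range a).ncard < r →
      ∀ f ∈ F n, ∀ σ : A → A, f (σ ∘ a) = σ (f a) := by
  intro n a hcard f hf σ
  classical
  have hfin : (Set.range a).Finite := Set.finite_range a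
  haveI := hfin.fintype
  set k := Fintype.card (Set.range a) with hkdef
  have hk : k < r := by
    have : (Set.range a).ncard = k := by
      rw [← Nat.card_coe_set_eq, Nat.card_eq_fintype_card]
    omega
  let e : (Set.range a) ≃ Fin k := Fintype.equivFin _
  let b : Fin k → A := fun j => (e.symm j : A)
  let φ : Fin n → Fin k := fun i => e ⟨a i, Set.mem_range_self i⟩
  have hba : ∀ i, b (φ i) = a i := by
    intro i; simp [b, φ]
  let g : (Fin k → A) → A := fun x => f (fun i => x (φ i))
  have hg : g ∈ F k := hF.2 n k f (fun i x => x (φ i)) hf (fun i => hF.1 k (φ i))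
  obtain ⟨j, hj⟩ := hproj k hk g hg
  have h1 : f a = b j := by
    have := congrFun hj b
    simpa [g, funext hba] using this
  have h2 : f (σ ∘ a) = σ (b j) := by
    have := congrFun hj (σ ∘ b)
    have heq : (fun i => σ (b (φ i))) = σ ∘ a := by
      funext i; simp [Function.comp, hba i]
    simpa [g, heq] using this
  rw [h1, h2]
end

section
/- Let F be a conservative clone on a finite set A with |A| ≥ 2 and r(F) = r ≥ 4. Then every n-ary function f ∈ F coincides with some projection on the set of all n-tuples whose range has fewer than r elements. -/
open Function

theorem stmt_11 {A : Type*} [Finite A] [Nontrivial A]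
    (F : ∀ n : ℕ, Set ((Fin n → A) → A)) (hF : IsClone F) (hcons : IsConservative F)
    (r : ℕ) (hr : 4 ≤ r)
    -- r(F) = r : every function in F of arity < r is a projection,
    -- and F contains an r-ary function that is not a projection
    (hproj : ∀ m : ℕ, m < r → ∀ f ∈ F m, ∃ i : Fin m, f = fun x => x i)
    (hex : ∃ g ∈ F r, ¬ ∃ i : Fin r, g = fun x : Fin r → A => x i) :
    ∀ (n : ℕ), ∀ f ∈ F n, ∃ i : Fin n, ∀ a : Fin n → A,
      (Set.range a).ncard < r → f a = a i := by
  classical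
  intro n f hf
  obtain ⟨u, v, huv⟩ := exists_pair_ne A
  set m := r - 1 with hm
  have hm3 : 3 ≤ m := by omega
  have hmr : m < r := by omega
  -- For each e : Fin n → Fin m, the induced m-ary function is a projection.
  have key : ∀ e : Fin n → Fin m, ∃ j : Fin m, ∀ x : Fin m → A, f (x ∘ e) = x j := by
    intro e
    have hg : (fun x : Fin m → A => f (fun i => x (e i))) ∈ F m :=
      hF.2 n m f (fun i x => x (e i)) hf (fun i => hF.1 m (e i))
    obtain ⟨j, hj⟩ := hproj m hmr _ hg
    refine ⟨j, fun x => ?_⟩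
    have := congrFun hj x
    simpa [Function.comp_def] using this
  -- choose the projection index
  let J : (Fin n → Fin m) → Fin m := fun e => (key e).choose
  have hJ : ∀ (e : Fin n → Fin m) (x : Fin m → A), f (x ∘ e) = x (J e) :=
    fun e => (key e).choose_spec
  have uniq : ∀ (e : Fin n → Fin m) (j : Fin m), (∀ x : Fin m → A, f (x ∘ e) = x j) →
      j = J e := by
    intro e j h
    by_contra hne
    have h1 := h (Function.update (fun _ => u) (J e) v)
    have h2 := hJ e (Function.update (fun _ => u) (J e) v)
    rw [h1] at h2
    rw [Function.update_of_ne hne, Function.update_self] at h2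
    exact huv h2
  -- the chosen index lies in the range of e
  have mem : ∀ e : Fin n → Fin m, ∃ i : Fin n, e i = J e := by
    intro e
    by_contra h
    push_neg at h
    have hx : ((fun _ => u : Fin m → A)) ∘ e
        = (Function.update (fun _ => u) (J e) v) ∘ e := by
      funext i
      simp [Function.comp, Function.update_of_ne (h i)]
    have h1 := hJ e (fun _ => u)
    have h2 := hJ e (Function.update (fun _ => u) (J e) v)
    rw [hx] at h1
    rw [h1] at h2
    rw [Function.update_self] at h2
    exact huv h2
  -- blocks
  let B : (Fin n → Fin m) → Set (Fin n) := fun e => {i | e i = J e}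
  have hBne : ∀ e, (B e).Nonempty := fun e => mem e
  have Jcomp : ∀ (e : Fin n → Fin m) (σ : Fin m → Fin m), J (σ ∘ e) = σ (J e) := by
    intro e σ
    refine (uniq (σ ∘ e) (σ (J e)) ?_).symm
    intro x
    have := hJ e (x ∘ σ)
    simpa [Function.comp_def] using this
  have mono : ∀ (e : Fin n → Fin m) (σ : Fin m → Fin m), B e ⊆ B (σ ∘ e) := by
    intro e σ i hi
    have : e i = J e := hi
    show σ (e i) = J (σ ∘ e)
    rw [Jcomp e σ, this]
  -- pick e₀ with minimal block
  have : Nonempty (Fin n → Fin m) := ⟨fun _ => ⟨0, by omega⟩⟩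
  obtain ⟨e₀, hmin⟩ := Finite.exists_min (fun e : Fin n → Fin m => (B e).ncard)
  -- numerals in Fin m
  let z0 : Fin m := ⟨0, by omega⟩
  let z1 : Fin m := ⟨1, by omega⟩
  let z2 : Fin m := ⟨2, by omega⟩
  have h01 : z0 ≠ z1 := by simp [z0, z1, Fin.ext_iff]
  have h02 : z0 ≠ z2 := by simp [z0, z2, Fin.ext_iff]
  have h12 : z1 ≠ z2 := by simp [z1, z2, Fin.ext_iff]
  -- the minimal block is contained in every block
  have hsub : ∀ e : Fin n → Fin m, B e₀ ⊆ B e := by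
    intro e
    -- two-valued coarsenings
    set q : Fin n → Fin m := (fun j => if j = J e₀ then z0 else z1) ∘ e₀ with hq
    set q' : Fin n → Fin m := (fun j => if j = J e then z0 else z1) ∘ e with hq'
    have hJq : J q = z0 := by rw [hq, Jcomp]; simp
    have hJq' : J q' = z0 := by rw [hq', Jcomp]; simp
    have hBq : B q = B e₀ := by
      ext i
      simp only [B, Set.mem_setOf_eq]; rw [hJq]; simp only [hq, Function.comp]
      constructor
      · intro h
        by_contra hne
        rw [if_neg hne] at h
        exact h01 h.symm
      · intro h; rw [if_pos h]
    have hBq' : B q' = B e := by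
      ext i
      simp only [B, Set.mem_setOf_eq]; rw [hJq']; simp only [hq', Function.comp]
      constructor
      · intro h
        by_contra hne
        rw [if_neg hne] at h
        exact h01 h.symm
      · intro h; rw [if_pos h]
    -- three-valued refinement p
    set p : Fin n → Fin m :=
      fun i => if e₀ i = J e₀ then (if e i = J e then z0 else z1) else z2 with hp
    have hqp : q = (fun k => if k = z2 then z1 else z0) ∘ p := by
      funext i
      simp only [hq, hp, Function.comp]
      by_cases h0 : e₀ i = J e₀
      · rw [if_pos h0, if_pos h0]
        by_cases h1 : e i = J e
        · rw [if_pos h1, if_neg h02]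
        · rw [if_neg h1, if_neg h12]
      · rw [if_neg h0, if_neg h0, if_pos rfl]
    have hBp : B p ⊆ B e₀ := by
      rw [← hBq, hqp]; exact mono p _
    have hBpe : B p = B e₀ := by
      refine Set.eq_of_subset_of_ncard_le hBp ?_ (Set.toFinite _)
      exact hmin p
    obtain ⟨i₀, hi₀⟩ := hBne e₀
    have hpi₀ : p i₀ = J p := by rw [← hBpe] at hi₀; exact hi₀
    have hJp2 : J p ≠ z2 := by
      intro hc
      rw [hc, hp] at hpi₀
      simp only at hpi₀
      rw [if_pos (show e₀ i₀ = J e₀ from hi₀)] at hpi₀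
      by_cases h1 : e i₀ = J e
      · rw [if_pos h1] at hpi₀; exact h02 hpi₀
      · rw [if_neg h1] at hpi₀; exact h12 hpi₀
    by_cases hJp : J p = z0
    · -- B e₀ ⊆ B e
      intro i hi
      have hpi : p i = z0 := by
        have : p i = J p := by rw [← hBpe] at hi; exact hi
        rw [this, hJp]
      rw [hp] at hpi
      simp only at hpi
      rw [if_pos (show e₀ i = J e₀ from hi)] at hpi
      by_cases h1 : e i = J e
      · exact h1
      · rw [if_neg h1] at hpi; exact absurd hpi.symm h01
    · -- J p = z1, so B e₀ ∩ B e = ∅; derive a contradiction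
      exfalso
      have hJp1 : J p = z1 := by
        have : p i₀ = J p := hpi₀
        rw [hp] at this
        simp only at this
        rw [if_pos (show e₀ i₀ = J e₀ from hi₀)] at this
        by_cases h1 : e i₀ = J e
        · rw [if_pos h1] at this; exact absurd this.symm hJp
        · rw [if_neg h1] at this; exact this.symm
      have hdisj : ∀ i, i ∈ B e₀ → e i ≠ J e := by
        intro i hi hc
        have hpi : p i = J p := by rw [← hBpe] at hi; exact hi
        rw [hp, hJp1] at hpi
        simp only at hpi
        rw [if_pos (show e₀ i = J e₀ from hi), if_pos hc] at hpi
        exact h01 hpi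
      set s : Fin n → Fin m :=
        fun i => if e₀ i = J e₀ then z0 else if e i = J e then z1 else z2 with hs
      have hqs : q = (fun k => if k = z0 then z0 else z1) ∘ s := by
        funext i
        simp only [hq, hs, Function.comp]
        by_cases h0 : e₀ i = J e₀
        · rw [if_pos h0, if_pos h0, if_pos rfl]
        · rw [if_neg h0, if_neg h0]
          by_cases h1 : e i = J e
          · rw [if_pos h1, if_neg (Ne.symm h01)]
          · rw [if_neg h1, if_neg (Ne.symm h02)]
      have hq's : q' = (fun k => if k = z1 then z0 else z1) ∘ s := by
        funext i
        simp only [hq', hs, Function.comp]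
        by_cases h0 : e₀ i = J e₀
        · rw [if_pos h0, if_neg h01, if_neg (hdisj i h0)]
        · rw [if_neg h0]
          by_cases h1 : e i = J e
          · rw [if_pos h1, if_pos h1, if_pos rfl]
          · rw [if_neg h1, if_neg h1, if_neg (Ne.symm h12)]
      have hs0 : B s ⊆ B e₀ := by rw [← hBq, hqs]; exact mono s _
      have hs1 : B s ⊆ B e := by rw [← hBq', hq's]; exact mono s _
      obtain ⟨i₁, hi₁⟩ := hBne s
      exact hdisj i₁ (hs0 hi₁) (hs1 hi₁)
  -- conclude
  obtain ⟨i₀, hi₀⟩ := hBne e₀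
  refine ⟨i₀, fun a hcard => ?_⟩
  -- factor a through Fin m
  have hfin : (Set.range a).Finite := Set.toFinite _
  have hcard' : Nat.card (Set.range a) ≤ m := by
    rw [Nat.card_coe_set_eq]
    omega
  haveI : Fintype (Set.range a) := hfin.fintype
  have hcard'' : Fintype.card (Set.range a) ≤ Fintype.card (Fin m) := by
    rw [Fintype.card_fin, ← Nat.card_eq_fintype_card]
    exact hcard'
  obtain ⟨φ⟩ := Function.Embedding.nonempty_of_card_le hcard''
  set e : Fin n → Fin m := fun i => φ ⟨a i, ⟨i, rfl⟩⟩ with he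
  set b : Fin m → A :=
    fun j => if h : ∃ w : Set.range a, φ w = j then ((Classical.choose h : Set.range a) : A)
      else u with hb
  have hba : ∀ i, b (e i) = a i := by
    intro i
    have hex' : ∃ w : Set.range a, φ w = e i := ⟨⟨a i, ⟨i, rfl⟩⟩, rfl⟩
    rw [hb]
    simp only [dif_pos hex']
    have := Classical.choose_spec hex'
    have heq : Classical.choose hex' = (⟨a i, ⟨i, rfl⟩⟩ : Set.range a) := φ.injective this
    rw [heq]
  have hae : a = b ∘ e := by funext i; exact (hba i).symm
  have h1 : f a = b (J e) := by rw [hae]; exact hJ e b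
  have h2 : e i₀ = J e := hsub e hi₀
  rw [h1, ← h2, hba i₀]
end

section
/- Let F be a conservative symmetric clone on a set A and n a natural number. If F contains an n-ary function f that is not a projection but coincides with some projection on all non-injective n-tuples, then F satisfies Δ^s_n: there is an i < n such that for every injective n-tuple a ∈ A^n and every a' in its range, F contains an n-ary s with s(a)=a' and s(x)=x_i for all non-injective x. -/
open Function

lemma exists_perm_comp_aux {A : Type*} : ∀ {n : ℕ} (c d : Fin n → A),
    Function.Injective c → Function.Injective d →
    ∃ σ : Equiv.Perm A, ∀ m, σ (c m) = d m := by
  intro n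
  induction n with
  | zero => exact fun c d _ _ => ⟨1, fun m => m.elim0⟩
  | succ n ih =>
    intro c d hc hd
    classical
    obtain ⟨σ, hσ⟩ := ih (c ∘ Fin.castSucc) (d ∘ Fin.castSucc)
      (hc.comp (Fin.castSucc_injective n)) (hd.comp (Fin.castSucc_injective n))
    refine ⟨σ.trans (Equiv.swap (σ (c (Fin.last n))) (d (Fin.last n))), fun m => ?_⟩
    cases m using Fin.lastCases with
    | last => simp
    | cast j =>
      have h1 : σ (c j.castSucc) = d j.castSucc := hσ j
      have hne1 : d j.castSucc ≠ σ (c (Fin.last n)) := by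
        intro h
        have := σ.injective (h1.trans h)
        exact (Fin.castSucc_lt_last j).ne (hc this)
      have hne2 : d j.castSucc ≠ d (Fin.last n) := by
        intro h
        exact (Fin.castSucc_lt_last j).ne (hd h)
      simp [h1, Equiv.swap_apply_of_ne_of_ne hne1 hne2]

theorem stmt_12 {A : Type*}
    (F : ∀ n : ℕ, Set ((Fin n → A) → A)) (hF : IsClone F)
    (hcons : IsConservative F) (hsym : IsSymmetric F) (n : ℕ)
    (hex : ∃ f ∈ F n, (¬ ∃ i : Fin n, f = fun x : Fin n → A => x i) ∧
      ∃ i : Fin n, ∀ x : Fin n → A, ¬ Function.Injective x → f x = x i) :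
    DeltaS F n := by
  obtain ⟨f, hfF, hnp, i, hfproj⟩ := hex
  refine ⟨i, fun a ha j => ?_⟩
  by_cases hji : j = i
  · exact ⟨fun x => x i, hF.1 n i, by rw [hji], fun x _ => rfl⟩
  -- find an injective tuple where f differs from projection i
  have hne : f ≠ fun x => x i := fun h => hnp ⟨i, h⟩
  obtain ⟨b, hb⟩ := Function.ne_iff.mp hne
  have hbinj : Function.Injective b := by
    by_contra h
    exact hb (hfproj b h)
  obtain ⟨k, hk⟩ := hcons n f hfF b
  have hki : k ≠ i := by
    intro h
    exact hb (by rw [← hk, h])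
  set π : Equiv.Perm (Fin n) := Equiv.swap k j with hπ
  have hπi : π i = i := Equiv.swap_apply_of_ne_of_ne (Ne.symm hki) (Ne.symm hji)
  have hπk : π k = j := Equiv.swap_apply_left k j
  obtain ⟨σ, hσ⟩ := exists_perm_comp_aux (fun m => a (π m)) b
    (ha.comp π.injective) hbinj
  -- membership of s in F
  have hg : (fun x : Fin n → A => f fun m => x (π m)) ∈ F n :=
    hF.2 n n f (fun m x => x (π m)) hfF (fun m => hF.1 n (π m))
  have hs : (fun x : Fin n → A =>
      σ.symm ((fun y : Fin n → A => f fun m => y (π m)) (σ ∘ x))) ∈ F n :=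
    hsym n _ hg σ
  refine ⟨_, hs, ?_, ?_⟩
  · show σ.symm (f fun m => σ (a (π m))) = a j
    have : (fun m => σ (a (π m))) = b := funext hσ
    rw [this, ← hk, ← hσ k, Equiv.symm_apply_apply, hπk]
  · intro x hx
    show σ.symm (f fun m => σ (x (π m))) = x i
    have hnx : ¬ Function.Injective fun m => σ (x (π m)) := by
      intro h
      have h' : Function.Injective (σ ∘ (x ∘ ⇑π)) := h
      have h2 : Function.Injective ((x ∘ ⇑π) ∘ ⇑π.symm) :=
        (h'.of_comp).comp π.symm.injective
      apply hx
      intro u v huv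
      exact h2 (show ((x ∘ ⇑π) ∘ ⇑π.symm) u = ((x ∘ ⇑π) ∘ ⇑π.symm) v by
        simpa [Function.comp_def] using huv)
    rw [hfproj _ hnx, hπi, Equiv.symm_apply_apply]
end

section
/- Let F be a conservative symmetric clone on a set A. If F contains a ∂-function (a ternary function with ∂(x,x,y)=∂(x,y,x)=∂(y,x,x)=x), then F satisfies Δ^∂: for every injective triple a ∈ A^3 and every a' in its range, F contains a ∂-function ∂' with ∂'(a) = a'. -/
open Function

lemma partial_of_almost {A : Type*} {d : (Fin 3 → A) → A} (hd : IsPartialFn d)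
    {v : Fin 3 → A} {x y : A} (i : Fin 3) (hi : v i = y) (h : ∀ k, k ≠ i → v k = x) :
    d v = x := by
  fin_cases i
  · have : v = ![y, x, x] := by
      funext k; fin_cases k
      · exact hi
      · exact h 1 (by decide)
      · exact h 2 (by decide)
    rw [this]; exact (hd x y).2.2
  · have : v = ![x, y, x] := by
      funext k; fin_cases k
      · exact h 0 (by decide)
      · exact hi
      · exact h 2 (by decide)
    rw [this]; exact (hd x y).2.1
  · have : v = ![x, x, y] := by
      funext k; fin_cases k
      · exact h 0 (by decide)
      · exact h 1 (by decide)
      · exact hi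
    rw [this]; exact (hd x y).1

lemma partial_perm_args {A : Type*} {d : (Fin 3 → A) → A} (hd : IsPartialFn d)
    (e : Equiv.Perm (Fin 3)) : IsPartialFn (fun v => d (fun i => v (e i))) := by
  have key : ∀ (v : Fin 3 → A) (x y : A) (i : Fin 3), v i = y → (∀ k, k ≠ i → v k = x) →
      d (fun m => v (e m)) = x := by
    intro v x y i hi h
    refine partial_of_almost (v := fun m => v (e m)) (x := x) (y := y) hd (e.symm i)
      (by simp [hi]) ?_
    intro k hk
    exact h (e k) (fun hc => hk (by simp [← hc]))
  intro x y
  refine ⟨key ![x, x, y] x y 2 rfl ?_, key ![x, y, x] x y 1 rfl ?_,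
    key ![y, x, x] x y 0 rfl ?_⟩ <;> (intro k hk; fin_cases k <;> simp_all)

lemma partial_conj {A : Type*} {d : (Fin 3 → A) → A} (hd : IsPartialFn d)
    (σ : Equiv.Perm A) : IsPartialFn (fun v => σ.symm (d (σ ∘ v))) := by
  intro x y
  have h1 : σ ∘ ![x, x, y] = ![σ x, σ x, σ y] := by
    funext k; fin_cases k <;> simp
  have h2 : σ ∘ ![x, y, x] = ![σ x, σ y, σ x] := by
    funext k; fin_cases k <;> simp
  have h3 : σ ∘ ![y, x, x] = ![σ y, σ x, σ x] := by
    funext k; fin_cases k <;> simp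
  refine ⟨?_, ?_, ?_⟩ <;>
    simp [h1, h2, h3, (hd (σ x) (σ y)).1, (hd (σ x) (σ y)).2.1, (hd (σ x) (σ y)).2.2]

theorem stmt_13 {A : Type*}
    (F : ∀ n : ℕ, Set ((Fin n → A) → A)) (hF : IsClone F)
    (hcons : IsConservative F) (hsym : IsSymmetric F)
    (hex : ∃ d ∈ F 3, IsPartialFn d) :
    DeltaPartial F := by
  classical
  obtain ⟨d, hdF, hd⟩ := hex
  intro a ha j
  obtain ⟨k, hk⟩ := hcons 3 d hdF a
  set π : Equiv.Perm (Fin 3) := Equiv.swap j k with hπ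
  set σ : Equiv.Perm A := Equiv.swap (a j) (a k) with hσ
  have hσa : ∀ i, σ (a i) = a (π i) := by
    intro i
    by_cases h1 : i = j
    · subst h1; simp [hσ, hπ]
    · by_cases h2 : i = k
      · subst h2; simp [hσ, hπ]
      · rw [hσ, hπ, Equiv.swap_apply_of_ne_of_ne (fun hc => h1 (ha hc))
          (fun hc => h2 (ha hc)), Equiv.swap_apply_of_ne_of_ne h1 h2]
  -- d₁ : permute arguments of d by π
  set d₁ : (Fin 3 → A) → A := fun v => d (fun i => v (π i)) with hd₁def
  have hd₁F : d₁ ∈ F 3 := hF.2 3 3 d (fun i => fun x => x (π i)) hdF (fun i => hF.1 3 (π i))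
  have hd₁ : IsPartialFn d₁ := partial_perm_args hd π
  -- p : conjugate d₁ by σ
  refine ⟨fun v => σ.symm (d₁ (σ ∘ v)), hsym 3 d₁ hd₁F σ, partial_conj hd₁ σ, ?_⟩
  show σ.symm (d₁ (σ ∘ a)) = a j
  have h3 : (fun i => (σ ∘ a) (π i)) = a := by
    funext i
    simp only [Function.comp_apply, hσa (π i)]; simp only [hπ, Equiv.swap_apply_self]
  have h4 : d₁ (σ ∘ a) = d a := by rw [hd₁def]; exact congrArg d h3
  have h5 : σ (a j) = a k := by simp [hσ]
  rw [h4, ← hk, ← h5, Equiv.symm_apply_apply]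
end

section
/- Let F be a conservative symmetric clone on a set A. If F contains an ℓ-function, i.e. a ternary function ℓ with ℓ(x,y,y)=ℓ(y,x,y)=ℓ(y,y,x)=x for all x,y, then F satisfies Δ^s_3: there is i < 3 such that for every injective triple a ∈ A^3 and every a' in its range, F contains a ternary s with s(a)=a' and s(x)=x_i for all non-injective triples x. -/
open Function

/-- minority predicate -/
def Min3 {A : Type*} (m : (Fin 3 → A) → A) : Prop :=
  ∀ x y : A, m ![x, y, y] = x ∧ m ![y, x, y] = x ∧ m ![y, y, x] = x

lemma lemM {A : Type*} {m : (Fin 3 → A) → A} (hmin : Min3 m) (x y : A) (p : Fin 3)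
    (v : Fin 3 → A) (hv : ∀ i, v i = if i = p then x else y) : m v = x := by
  fin_cases p
  · have hveq : v = ![x, y, y] := by funext i; rw [hv i]; fin_cases i <;> simp
    rw [hveq]; exact (hmin x y).1
  · have hveq : v = ![y, x, y] := by funext i; rw [hv i]; fin_cases i <;> simp
    rw [hveq]; exact (hmin x y).2.1
  · have hveq : v = ![y, y, x] := by funext i; rw [hv i]; fin_cases i <;> simp
    rw [hveq]; exact (hmin x y).2.2

lemma lemP {A : Type*} {m : (Fin 3 → A) → A} (hmin : Min3 m) (τ : Equiv.Perm A)
    (π : Equiv.Perm (Fin 3)) (x y : A) (v : Fin 3 → A) (p : Fin 3)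
    (hv : ∀ i, v i = if i = p then x else y) :
    m (fun i => τ (v (π i))) = τ x := by
  apply lemM hmin (τ x) (τ y) (π.symm p)
  intro i
  rw [hv (π i)]
  by_cases h : π i = p
  · rw [if_pos h, if_pos (by rw [← h]; simp)]
  · rw [if_neg h, if_neg (fun hh => h (by rw [hh]; simp))]

lemma pat0 {A : Type*} (x y : A) : ∀ i, (![x, y, y] : Fin 3 → A) i = if i = 0 then x else y := by
  intro i; fin_cases i <;> simp

lemma pat1 {A : Type*} (x y : A) : ∀ i, (![y, x, y] : Fin 3 → A) i = if i = 1 then x else y := by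
  intro i; fin_cases i <;> simp

lemma pat2 {A : Type*} (x y : A) : ∀ i, (![y, y, x] : Fin 3 → A) i = if i = 2 then x else y := by
  intro i; fin_cases i <;> simp

lemma build {A : Type*} (F : ∀ n : ℕ, Set ((Fin n → A) → A)) (hF : IsClone F)
    (hsym : IsSymmetric F) {m : (Fin 3 → A) → A} (hm : m ∈ F 3) (hmin : Min3 m)
    (a : Fin 3 → A) (ha : Function.Injective a) (k0 r : Fin 3) (hk : m a = a k0) :
    ∃ f ∈ F 3, Min3 f ∧ f a = a r := by
  classical
  set τ : Equiv.Perm A := Equiv.swap (a k0) (a r) with hτ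
  set π : Equiv.Perm (Fin 3) := Equiv.swap k0 r with hπ
  set mτ : (Fin 3 → A) → A := fun y => τ.symm (m (τ ∘ y)) with hmτ
  have hmτF : mτ ∈ F 3 := hsym 3 m hm τ
  refine ⟨fun x => mτ (fun i => x (π i)), ?_, ?_, ?_⟩
  · exact hF.2 3 3 mτ (fun i => fun x => x (π i)) hmτF (fun i => hF.1 3 (π i))
  · intro x y
    refine ⟨?_, ?_, ?_⟩
    · show τ.symm (m (τ ∘ fun i => (![x,y,y] : Fin 3 → A) (π i))) = x
      rw [show (τ ∘ fun i => (![x,y,y] : Fin 3 → A) (π i)) = (fun i => τ ((![x,y,y] : Fin 3 → A) (π i))) from rfl]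
      rw [lemP hmin τ π x y _ 0 (pat0 x y)]
      simp
    · show τ.symm (m (τ ∘ fun i => (![y,x,y] : Fin 3 → A) (π i))) = x
      rw [show (τ ∘ fun i => (![y,x,y] : Fin 3 → A) (π i)) = (fun i => τ ((![y,x,y] : Fin 3 → A) (π i))) from rfl]
      rw [lemP hmin τ π x y _ 1 (pat1 x y)]
      simp
    · show τ.symm (m (τ ∘ fun i => (![y,y,x] : Fin 3 → A) (π i))) = x
      rw [show (τ ∘ fun i => (![y,y,x] : Fin 3 → A) (π i)) = (fun i => τ ((![y,y,x] : Fin 3 → A) (π i))) from rfl]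
      rw [lemP hmin τ π x y _ 2 (pat2 x y)]
      simp
  · show τ.symm (m (τ ∘ fun i => a (π i))) = a r
    have key : (τ ∘ fun i => a (π i)) = a := by
      funext i
      show τ (a (π i)) = a i
      by_cases h1 : i = k0
      · subst h1
        rw [hπ, Equiv.swap_apply_left, hτ, Equiv.swap_apply_right]
      · by_cases h2 : i = r
        · subst h2
          rw [hπ, Equiv.swap_apply_right, hτ, Equiv.swap_apply_left]
        · rw [hπ, Equiv.swap_apply_of_ne_of_ne h1 h2, hτ,
            Equiv.swap_apply_of_ne_of_ne (fun hh => h1 (ha hh)) (fun hh => h2 (ha hh))]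
    rw [key, hk, hτ]
    simp


theorem stmt_14 {A : Type*}
    (F : ∀ n : ℕ, Set ((Fin n → A) → A)) (hF : IsClone F)
    (hcons : IsConservative F) (hsym : IsSymmetric F)
    (hex : ∃ l ∈ F 3, ∀ x y : A, l ![x, y, y] = x ∧ l ![y, x, y] = x ∧ l ![y, y, x] = x) :
    DeltaS F 3 := by
  classical
  obtain ⟨m, hm, hmin⟩ := hex
  have hmin : Min3 m := hmin
  refine ⟨0, ?_⟩
  intro a ha j
  obtain ⟨k0, hk0⟩ := hcons 3 m hm a
  have hk : m a = a k0 := hk0.symm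
  have ninj : ∀ x : Fin 3 → A, ¬ Function.Injective x →
      x 0 = x 1 ∨ x 0 = x 2 ∨ x 1 = x 2 := by
    intro x hx
    by_contra hc
    push_neg at hc
    exact hx (fun i j hij => by fin_cases i <;> fin_cases j <;> simp_all)
  fin_cases j
  · exact ⟨fun x => x 0, hF.1 3 0, rfl, fun x _ => rfl⟩
  · obtain ⟨f, hfF, hfmin, hfa⟩ := build F hF hsym hm hmin a ha k0 2 hk
    refine ⟨fun x => m ![x 1, x 2, f x], ?_, ?_, ?_⟩
    · have hg : ∀ i : Fin 3,
          (![fun x : Fin 3 → A => x 1, fun x => x 2, f] : Fin 3 → (Fin 3 → A) → A) i ∈ F 3 := by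
        intro i; fin_cases i
        · exact hF.1 3 1
        · exact hF.1 3 2
        · exact hfF
      have hmem := hF.2 3 3 m _ hm hg
      have heq : (fun x => m fun i =>
          (![fun x : Fin 3 → A => x 1, fun x => x 2, f] : Fin 3 → (Fin 3 → A) → A) i x)
          = (fun x => m ![x 1, x 2, f x]) := by
        funext x; congr 1; funext i; fin_cases i <;> rfl
      rwa [heq] at hmem
    · show m ![a 1, a 2, f a] = a 1
      rw [hfa]
      exact (hmin (a 1) (a 2)).1
    · intro x hx
      rcases ninj x hx with h | h | h
      · have hv : x = ![x 0, x 0, x 2] := by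
          funext i; fin_cases i
          · rfl
          · simpa using h.symm
          · rfl
        have hfx : f x = x 2 := by rw [hv]; exact (hfmin (x 2) (x 0)).2.2
        show m ![x 1, x 2, f x] = x 0
        rw [hfx, ← h]
        exact (hmin (x 0) (x 2)).1
      · have hv : x = ![x 0, x 1, x 0] := by
          funext i; fin_cases i
          · rfl
          · rfl
          · simpa using h.symm
        have hfx : f x = x 1 := by rw [hv]; exact (hfmin (x 1) (x 0)).2.1
        show m ![x 1, x 2, f x] = x 0
        rw [hfx, ← h]
        exact (hmin (x 0) (x 1)).2.1
      · have hv : x = ![x 0, x 1, x 1] := by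
          funext i; fin_cases i
          · rfl
          · rfl
          · simpa using h.symm
        have hfx : f x = x 0 := by rw [hv]; exact (hfmin (x 0) (x 1)).1
        show m ![x 1, x 2, f x] = x 0
        rw [hfx, ← h]
        exact (hmin (x 0) (x 1)).2.2
  · obtain ⟨f, hfF, hfmin, hfa⟩ := build F hF hsym hm hmin a ha k0 1 hk
    refine ⟨fun x => m ![x 2, x 1, f x], ?_, ?_, ?_⟩
    · have hg : ∀ i : Fin 3,
          (![fun x : Fin 3 → A => x 2, fun x => x 1, f] : Fin 3 → (Fin 3 → A) → A) i ∈ F 3 := by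
        intro i; fin_cases i
        · exact hF.1 3 2
        · exact hF.1 3 1
        · exact hfF
      have hmem := hF.2 3 3 m _ hm hg
      have heq : (fun x => m fun i =>
          (![fun x : Fin 3 → A => x 2, fun x => x 1, f] : Fin 3 → (Fin 3 → A) → A) i x)
          = (fun x => m ![x 2, x 1, f x]) := by
        funext x; congr 1; funext i; fin_cases i <;> rfl
      rwa [heq] at hmem
    · show m ![a 2, a 1, f a] = a 2
      rw [hfa]
      exact (hmin (a 2) (a 1)).1
    · intro x hx
      rcases ninj x hx with h | h | h
      · have hv : x = ![x 0, x 0, x 2] := by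
          funext i; fin_cases i
          · rfl
          · simpa using h.symm
          · rfl
        have hfx : f x = x 2 := by rw [hv]; exact (hfmin (x 2) (x 0)).2.2
        show m ![x 2, x 1, f x] = x 0
        rw [hfx, ← h]
        exact (hmin (x 0) (x 2)).2.1
      · have hv : x = ![x 0, x 1, x 0] := by
          funext i; fin_cases i
          · rfl
          · rfl
          · simpa using h.symm
        have hfx : f x = x 1 := by rw [hv]; exact (hfmin (x 1) (x 0)).2.1
        show m ![x 2, x 1, f x] = x 0
        rw [hfx, ← h]
        exact (hmin (x 0) (x 1)).1
      · have hv : x = ![x 0, x 1, x 1] := by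
          funext i; fin_cases i
          · rfl
          · rfl
          · simpa using h.symm
        have hfx : f x = x 0 := by rw [hv]; exact (hfmin (x 0) (x 1)).1
        show m ![x 2, x 1, f x] = x 0
        rw [hfx, ← h]
        exact (hmin (x 0) (x 1)).2.2
end

section
/- Let F be a conservative symmetric clone on a set A, and define ⊳_i (i=0,1) on injective pairs by a ⊳_i b iff every binary f ∈ F with f(a)=a_i satisfies f(b)=b_i. Then ⊳_0 = ⊳_1, and this common relation is symmetric: a ⊳_0 b iff b ⊳_0 a; moreover it coincides with the relation R_2(F) defined by (a,b) ∈ R_2(F) iff there is a permutation σ of A with f(b) = σ(f(a)) for all binary f ∈ F. -/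
open Function

/-- The relation ⊳_i on pairs (encoded as `Fin 2 → A`). -/
def Rhd {A : Type*} (F : ∀ n : ℕ, Set ((Fin n → A) → A)) (i : Fin 2)
    (a b : Fin 2 → A) : Prop :=
  ∀ f ∈ F 2, f a = a i → f b = b i

section Aux

variable {A : Type*} {F : ∀ n : ℕ, Set ((Fin n → A) → A)}

lemma rhd_conj (hsym : IsSymmetric F) (σ : Equiv.Perm A) {x y : Fin 2 → A}
    (h : Rhd F 0 x y) : Rhd F 0 (σ ∘ x) (σ ∘ y) := by
  intro f hf hfx
  have hg : (fun a : Fin 2 → A => σ.symm (f (σ ∘ a))) ∈ F 2 := hsym 2 f hf σ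
  have hx0 : σ.symm (f (σ ∘ x)) = x 0 := by
    rw [hfx]; simp [Function.comp]
  have := h _ hg hx0
  have : f (σ ∘ y) = σ (y 0) := by
    rw [← this]; simp
  simpa [Function.comp] using this

lemma rhd_trans {x y z : Fin 2 → A}
    (h1 : Rhd F 0 x y) (h2 : Rhd F 0 y z) : Rhd F 0 x z :=
  fun f hf hfx => h2 f hf (h1 f hf hfx)

lemma cons_two (hcons : IsConservative F) {f : (Fin 2 → A) → A} (hf : f ∈ F 2)
    (x : Fin 2 → A) : f x = x 0 ∨ f x = x 1 := by
  obtain ⟨i, hi⟩ := hcons 2 f hf x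
  fin_cases i
  · exact Or.inl hi.symm
  · exact Or.inr hi.symm

lemma rhd_symm (hsym : IsSymmetric F) {a b : Fin 2 → A}
    (ha : Function.Injective a) (hb : Function.Injective b)
    (h : Rhd F 0 a b) : Rhd F 0 b a := by
  classical
  have hx : a 0 ≠ a 1 := fun e => absurd (ha e) (by decide)
  have hy : b 0 ≠ b 1 := fun e => absurd (hb e) (by decide)
  set x0 := a 0 with hx0d
  set x1 := a 1 with hx1d
  set y0 := b 0 with hy0d
  set y1 := b 1 with hy1d
  by_cases hA : y1 = x0 ∧ y0 ≠ x1
  · -- 3-cycle x0 ↦ y0 ↦ x1 ↦ x0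
    obtain ⟨hA1, hA2⟩ := hA
    have hy0x0 : y0 ≠ x0 := fun e => hy (e.trans hA1.symm)
    set σ : Equiv.Perm A := Equiv.swap x1 y0 * Equiv.swap x0 x1 with hσ
    have hσx0 : σ x0 = y0 := by
      simp only [hσ, Equiv.Perm.mul_apply, Equiv.swap_apply_left]
    have hσx1 : σ x1 = x0 := by
      simp only [hσ, Equiv.Perm.mul_apply, Equiv.swap_apply_right]
      exact Equiv.swap_apply_of_ne_of_ne hx hy0x0.symm
    have hσy0 : σ y0 = x1 := by
      simp only [hσ, Equiv.Perm.mul_apply]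
      rw [Equiv.swap_apply_of_ne_of_ne hy0x0 hA2, Equiv.swap_apply_right]
    have hab : σ ∘ a = b := by
      funext i; fin_cases i
      · simpa [Function.comp, ← hx0d, ← hy0d] using hσx0
      · simp [Function.comp, ← hx1d, ← hy1d, hσx1, hA1]
    set c : Fin 2 → A := ![x1, y0] with hc
    have hbc : σ ∘ b = c := by
      funext i; fin_cases i
      · simpa [Function.comp, hc, ← hy0d] using hσy0
      · simp [Function.comp, hc, ← hy1d, hA1, hσx0]
    have hca : σ ∘ c = a := by
      funext i; fin_cases i
      · simpa [Function.comp, hc, ← hx0d] using hσx1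
      · simpa [Function.comp, hc, ← hx1d] using hσy0
    have h1 : Rhd F 0 b c := by
      have := rhd_conj hsym σ h
      rwa [hab, hbc] at this
    have h2 : Rhd F 0 c a := by
      have := rhd_conj hsym σ h1
      rwa [hbc, hca] at this
    exact rhd_trans h1 h2
  · by_cases hB : x1 = y0 ∧ y1 ≠ x0
    · -- 3-cycle x0 ↦ x1 ↦ y1 ↦ x0
      obtain ⟨hB1, hB2⟩ := hB
      have hy1x1 : y1 ≠ x1 := fun e => hy (e.trans hB1).symm
      set σ : Equiv.Perm A := Equiv.swap x0 y1 * Equiv.swap x0 x1 with hσ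
      have hσx0 : σ x0 = x1 := by
        simp only [hσ, Equiv.Perm.mul_apply, Equiv.swap_apply_left]
        exact Equiv.swap_apply_of_ne_of_ne hx.symm hy1x1.symm
      have hσx1 : σ x1 = y1 := by
        simp only [hσ, Equiv.Perm.mul_apply, Equiv.swap_apply_right, Equiv.swap_apply_left]
      have hσy1 : σ y1 = x0 := by
        simp only [hσ, Equiv.Perm.mul_apply]
        rw [Equiv.swap_apply_of_ne_of_ne hB2 hy1x1, Equiv.swap_apply_right]
      have hab : σ ∘ a = b := by
        funext i; fin_cases i
        · simp [Function.comp, ← hx0d, ← hy0d, hσx0, ← hB1]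
        · simpa [Function.comp, ← hx1d, ← hy1d] using hσx1
      set c : Fin 2 → A := ![y1, x0] with hc
      have hbc : σ ∘ b = c := by
        funext i; fin_cases i
        · simp [Function.comp, hc, ← hy0d, ← hB1, hσx1]
        · simpa [Function.comp, hc, ← hy1d] using hσy1
      have hca : σ ∘ c = a := by
        funext i; fin_cases i
        · simpa [Function.comp, hc, ← hx0d] using hσy1
        · simpa [Function.comp, hc, ← hx1d] using hσx0
      have h1 : Rhd F 0 b c := by
        have := rhd_conj hsym σ h
        rwa [hab, hbc] at this
      have h2 : Rhd F 0 c a := by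
        have := rhd_conj hsym σ h1
        rwa [hbc, hca] at this
      exact rhd_trans h1 h2
    · -- involution case
      push_neg at hA hB
      set g : A → A := fun z =>
        if z = x0 then y0 else if z = x1 then y1 else
        if z = y0 then x0 else if z = y1 then x1 else z with hg
      have hgx0 : g x0 = y0 := by simp [hg]
      have hgx1 : g x1 = y1 := by simp [hg, hx.symm]
      have hgy0 : g y0 = x0 := by
        by_cases h1 : y0 = x0
        · simp [hg, h1]
        · by_cases h2 : y0 = x1
          · simp only [hg, if_neg h1, if_pos h2]
            exact hB h2.symm
          · simp [hg, h1, h2]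
      have hgy1 : g y1 = x1 := by
        by_cases h1 : y1 = x0
        · simp only [hg, if_pos h1]
          exact hA h1
        · by_cases h2 : y1 = x1
          · simp only [hg]
            rw [if_neg h1, if_pos h2]
            exact h2
          · simp [hg, h1, h2, hy.symm]
      have hinv : Function.Involutive g := by
        intro z
        by_cases h1 : z = x0
        · rw [h1, hgx0, hgy0]
        · by_cases h2 : z = x1
          · rw [h2, hgx1, hgy1]
          · by_cases h3 : z = y0
            · rw [h3, hgy0, hgx0]
            · by_cases h4 : z = y1
              · rw [h4, hgy1, hgx1]
              · have hz : g z = z := by simp [hg, h1, h2, h3, h4]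
                rw [hz, hz]
      set σ : Equiv.Perm A := hinv.toPerm with hσ
      have hab : σ ∘ a = b := by
        funext i; fin_cases i
        · simpa [Function.comp, hσ, ← hx0d, ← hy0d] using hgx0
        · simpa [Function.comp, hσ, ← hx1d, ← hy1d] using hgx1
      have hba : σ ∘ b = a := by
        funext i; fin_cases i
        · simpa [Function.comp, hσ, ← hx0d, ← hy0d] using hgy0
        · simpa [Function.comp, hσ, ← hx1d, ← hy1d] using hgy1
      have := rhd_conj hsym σ h
      rwa [hab, hba] at this

lemma rhd_one_iff (hcons : IsConservative F) {a b : Fin 2 → A}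
    (ha : Function.Injective a) (hb : Function.Injective b) :
    Rhd F 1 a b ↔ Rhd F 0 b a := by
  have hx : a 0 ≠ a 1 := fun e => absurd (ha e) (by decide)
  have hy : b 0 ≠ b 1 := fun e => absurd (hb e) (by decide)
  constructor
  · intro h f hf hfb
    rcases cons_two hcons hf a with h0 | h1
    · exact h0
    · exact absurd (hfb.symm.trans (h f hf h1)) hy
  · intro h f hf hfa
    rcases cons_two hcons hf b with h0 | h1
    · have : a 0 = a 1 := (h f hf h0).symm.trans hfa
      exact absurd this hx
    · exact h1

end Aux

theorem stmt_16 {A : Type*}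
    (F : ∀ n : ℕ, Set ((Fin n → A) → A)) (hF : IsClone F)
    (hcons : IsConservative F) (hsym : IsSymmetric F) :
    ∀ a b : Fin 2 → A, Function.Injective a → Function.Injective b →
      (Rhd F 0 a b ↔ Rhd F 1 a b) ∧
      (Rhd F 0 a b ↔ Rhd F 0 b a) ∧
      (Rhd F 0 a b ↔ ∃ σ : Equiv.Perm A, ∀ f ∈ F 2, f b = σ (f a)) := by
  classical
  intro a b ha hb
  have hsymm : Rhd F 0 a b ↔ Rhd F 0 b a :=
    ⟨rhd_symm hsym ha hb, rhd_symm hsym hb ha⟩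
  have h01 : Rhd F 0 a b ↔ Rhd F 1 a b :=
    hsymm.trans (rhd_one_iff hcons ha hb).symm
  refine ⟨h01, hsymm, ?_⟩
  constructor
  · intro h0
    have h1 : Rhd F 1 a b := h01.mp h0
    have hx : a 0 ≠ a 1 := fun e => absurd (ha e) (by decide)
    have hy : b 0 ≠ b 1 := fun e => absurd (hb e) (by decide)
    set τ : Equiv.Perm A := Equiv.swap (a 0) (b 0) with hτ
    set σ : Equiv.Perm A := Equiv.swap (τ (a 1)) (b 1) * τ with hσ
    have hτa1 : τ (a 1) ≠ b 0 := by
      by_cases h2 : a 1 = b 0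
      · rw [h2, hτ, Equiv.swap_apply_right]
        intro e
        exact hx (e.trans h2.symm)
      · rw [hτ, Equiv.swap_apply_of_ne_of_ne hx.symm h2]
        exact h2
    have hσ0 : σ (a 0) = b 0 := by
      simp only [hσ, Equiv.Perm.mul_apply, hτ, Equiv.swap_apply_left]
      exact Equiv.swap_apply_of_ne_of_ne (Ne.symm hτa1) hy
    have hσ1 : σ (a 1) = b 1 := by
      simp only [hσ, Equiv.Perm.mul_apply, Equiv.swap_apply_left]
    refine ⟨σ, fun f hf => ?_⟩
    rcases cons_two hcons hf a with hc0 | hc1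
    · rw [hc0, hσ0]; exact h0 f hf hc0
    · rw [hc1, hσ1]; exact h1 f hf hc1
  · rintro ⟨σ, hσ⟩ f hf hfa
    have hproj : (fun x : Fin 2 → A => x (0 : Fin 2)) ∈ F 2 := hF.1 2 0
    have hb0 : b 0 = σ (a 0) := hσ _ hproj
    rw [hσ f hf, hfa, ← hb0]
end

section
/- Let A and Q be finite nonempty sets, F a clone on A satisfying Δ^2, and H ⊆ A^Q a Q-invariant set of F. Then H is decomposable over the family consisting of: all singletons {q} ⊆ Q; all pairs {p,q} such that h(p)=h(q) for all h ∈ H; and all sets Q^{[B]}_H = {q ∈ Q : H(q) ⊆ B} for two-element subsets B of A. That is, H equals the set of f ∈ A^Q whose restriction to each member R of this family lies in H|_R. -/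
open Function

section Helpers

variable {A Q : Type*}

private lemma vec_const (w : (Fin 2 → A) → A) (hw : ∀ x : A, w (fun _ => x) = x) (z : A) :
    w ![z, z] = z := by
  have h : (![z, z] : Fin 2 → A) = fun _ => z := by
    funext i; fin_cases i <;> rfl
  rw [h]; exact hw z

private lemma delta2' {F : ∀ n : ℕ, Set ((Fin n → A) → A)} (hΔ : Delta2 F)
    {x u y v t₁ t₂ : A} (hxu : x ≠ u) (hyv : y ≠ v)
    (hr : ({x, u} : Set A) ≠ {y, v}) (ht₁ : t₁ = x ∨ t₁ = u) (ht₂ : t₂ = y ∨ t₂ = v) :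
    ∃ w ∈ F 2, (∀ z : A, w ![z, z] = z) ∧ w ![x, u] = t₁ ∧ w ![y, v] = t₂ := by
  have hai : Function.Injective (![x, u] : Fin 2 → A) := by
    intro i j hij
    fin_cases i <;> fin_cases j <;> simp_all
  have hbi : Function.Injective (![y, v] : Fin 2 → A) := by
    intro i j hij
    fin_cases i <;> fin_cases j <;> simp_all
  have hra : Set.range (![x, u] : Fin 2 → A) = {x, u} := by
    ext z
    simp only [Set.mem_range, Set.mem_insert_iff, Set.mem_singleton_iff]
    constructor
    · rintro ⟨i, hi⟩
      fin_cases i <;> simp only [Matrix.cons_val_zero, Matrix.cons_val_one, Matrix.head_cons] at hi <;>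
        first | exact Or.inl hi.symm | exact Or.inr hi.symm
    · rintro (rfl | rfl)
      · exact ⟨0, rfl⟩
      · exact ⟨1, by simp⟩
  have hrb : Set.range (![y, v] : Fin 2 → A) = {y, v} := by
    ext z
    simp only [Set.mem_range, Set.mem_insert_iff, Set.mem_singleton_iff]
    constructor
    · rintro ⟨i, hi⟩
      fin_cases i <;> simp only [Matrix.cons_val_zero, Matrix.cons_val_one, Matrix.head_cons] at hi <;>
        first | exact Or.inl hi.symm | exact Or.inr hi.symm
    · rintro (rfl | rfl)
      · exact ⟨0, rfl⟩
      · exact ⟨1, by simp⟩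
  obtain ⟨i, hi⟩ : ∃ i : Fin 2, (![x, u] : Fin 2 → A) i = t₁ := by
    rcases ht₁ with rfl | rfl
    · exact ⟨0, rfl⟩
    · exact ⟨1, by simp⟩
  obtain ⟨j, hj⟩ : ∃ j : Fin 2, (![y, v] : Fin 2 → A) j = t₂ := by
    rcases ht₂ with rfl | rfl
    · exact ⟨0, rfl⟩
    · exact ⟨1, by simp⟩
  obtain ⟨w, hwF, hwid, hwa, hwb⟩ := hΔ ![x, u] ![y, v] hai hbi (by rw [hra, hrb]; exact hr) i j
  exact ⟨w, hwF, fun z => vec_const w hwid z, by rw [hwa, hi], by rw [hwb, hj]⟩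

private lemma pair_ne₁ {x y u v : A} (h1 : x ≠ u) (h2 : x ≠ v) : ({x, y} : Set A) ≠ {u, v} := by
  intro h
  have hm : x ∈ ({u, v} : Set A) := by rw [← h]; exact Set.mem_insert _ _
  rcases Set.mem_insert_iff.mp hm with h' | h'
  · exact h1 h'
  · exact h2 h'

private lemma pair_ne₂ {x y u v : A} (h1 : y ≠ u) (h2 : y ≠ v) : ({x, y} : Set A) ≠ {u, v} := by
  intro h
  have hm : y ∈ ({u, v} : Set A) := by
    rw [← h]; exact Set.mem_insert_iff.mpr (Or.inr rfl)
  rcases Set.mem_insert_iff.mp hm with h' | h'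
  · exact h1 h'
  · exact h2 h'

private lemma comp2 {F : ∀ n : ℕ, Set ((Fin n → A) → A)} {H : Set (Q → A)}
    (hH : ClInvariant F H) {w : (Fin 2 → A) → A} (hw : w ∈ F 2)
    {g₁ g₂ : Q → A} (h₁ : g₁ ∈ H) (h₂ : g₂ ∈ H) :
    (fun q => w ![g₁ q, g₂ q]) ∈ H := by
  have h := hH 2 w hw ![g₁, g₂] (by intro i; fin_cases i <;> [exact h₁; exact h₂])
  have e : (fun q => w fun i => ![g₁, g₂] i q) = fun q => w ![g₁ q, g₂ q] := by
    funext q; congr 1; funext i; fin_cases i <;> rfl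
  rwa [e] at h

private lemma three_two {e₁ e₂ e₃ s t : A} (h12 : e₁ ≠ e₂) (h13 : e₁ ≠ e₃) (h23 : e₂ ≠ e₃)
    (h1 : e₁ = s ∨ e₁ = t) (h2 : e₂ = s ∨ e₂ = t) (h3 : e₃ = s ∨ e₃ = t) : False := by
  rcases h1 with h1 | h1 <;> rcases h2 with h2 | h2 <;> rcases h3 with h3 | h3 <;>
    first
      | exact h12 (h1.trans h2.symm)
      | exact h13 (h1.trans h3.symm)
      | exact h23 (h2.trans h3.symm)

end Helpers


private lemma pairLemma {A Q : Type*} {F : ∀ n : ℕ, Set ((Fin n → A) → A)} (hΔ : Delta2 F)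
    (G : Set (Q → A))
    (hG : ∀ w ∈ F 2, (∀ z : A, w ![z, z] = z) →
      ∀ g₁ ∈ G, ∀ g₂ ∈ G, (fun q => w ![g₁ q, g₂ q]) ∈ G)
    (p₂ p₁ p₀ : Q) (p e₁ e₂ e₃ : A)
    (h12 : e₁ ≠ e₂) (h13 : e₁ ≠ e₃) (h23 : e₂ ≠ e₃)
    (hhelp : ∀ e, e = e₁ ∨ e = e₂ ∨ e = e₃ → ∃ h ∈ G, h p₂ = p ∧ h p₁ = e ∧ h p₀ = e)
    (v : Q → A) (hv : v ∈ G) (hvp : v p₂ ≠ p) (hst : v p₁ ≠ v p₀) :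
    ∃ z ∈ G, z p₂ = p ∧ z p₁ ≠ z p₀ := by
  by_cases hex : ∃ e, (e = e₁ ∨ e = e₂ ∨ e = e₃) ∧ e ≠ v p₁ ∧ e ≠ v p₀ ∧ e ≠ p
  · obtain ⟨e, heE, hes, het, hep⟩ := hex
    obtain ⟨he, heG, he2, he1, he0⟩ := hhelp e heE
    by_cases hpt : p = v p₀
    · -- route R2
      obtain ⟨w₁, hw₁F, hw₁id, hw₁a, hw₁b⟩ := delta2' hΔ (x := e) (u := v p₁) (y := e) (v := v p₀)
        hes het (pair_ne₂ (Ne.symm hes) hst) (Or.inr rfl) (Or.inl rfl)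
      have hxG : (fun q => w₁ ![he q, v q]) ∈ G := hG w₁ hw₁F hw₁id he heG v hv
      set x : Q → A := fun q => w₁ ![he q, v q] with hxdef
      have hx1 : x p₁ = v p₁ := by show w₁ ![he p₁, v p₁] = v p₁; rw [he1]; exact hw₁a
      have hx0 : x p₀ = e := by show w₁ ![he p₀, v p₀] = e; rw [he0]; exact hw₁b
      by_cases hz : x p₂ = p
      · exact ⟨x, hxG, hz, by rw [hx1, hx0]; exact fun h => hes h.symm⟩
      · obtain ⟨w₂, hw₂F, hw₂id, hw₂a, hw₂b⟩ := delta2' hΔ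
          (x := p) (u := x p₂) (y := e) (v := v p₁)
          (fun h => hz h.symm) hes
          (pair_ne₁ (Ne.symm hep) (by rw [hpt]; exact Ne.symm hst))
          (Or.inl rfl) (Or.inr rfl)
        refine ⟨fun q => w₂ ![he q, x q], hG w₂ hw₂F hw₂id he heG x hxG, ?_, ?_⟩
        · show w₂ ![he p₂, x p₂] = p; rw [he2]; exact hw₂a
        · show w₂ ![he p₁, x p₁] ≠ w₂ ![he p₀, x p₀]
          rw [he1, he0, hx1, hx0, hw₂b, hw₂id e]
          exact fun h => hes h.symm
    · -- route R1
      obtain ⟨w₁, hw₁F, hw₁id, hw₁a, hw₁b⟩ := delta2' hΔ (x := e) (u := v p₁) (y := e) (v := v p₀)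
        hes het (pair_ne₂ (Ne.symm hes) hst) (Or.inl rfl) (Or.inr rfl)
      have hxG : (fun q => w₁ ![he q, v q]) ∈ G := hG w₁ hw₁F hw₁id he heG v hv
      set x : Q → A := fun q => w₁ ![he q, v q] with hxdef
      have hx1 : x p₁ = e := by show w₁ ![he p₁, v p₁] = e; rw [he1]; exact hw₁a
      have hx0 : x p₀ = v p₀ := by show w₁ ![he p₀, v p₀] = v p₀; rw [he0]; exact hw₁b
      by_cases hz : x p₂ = p
      · exact ⟨x, hxG, hz, by rw [hx1, hx0]; exact het⟩
      · obtain ⟨w₂, hw₂F, hw₂id, hw₂a, hw₂b⟩ := delta2' hΔ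
          (x := p) (u := x p₂) (y := e) (v := v p₀)
          (fun h => hz h.symm) het
          (pair_ne₁ (Ne.symm hep) hpt)
          (Or.inl rfl) (Or.inr rfl)
        refine ⟨fun q => w₂ ![he q, x q], hG w₂ hw₂F hw₂id he heG x hxG, ?_, ?_⟩
        · show w₂ ![he p₂, x p₂] = p; rw [he2]; exact hw₂a
        · show w₂ ![he p₁, x p₁] ≠ w₂ ![he p₀, x p₀]
          rw [he1, he0, hx1, hx0, hw₂id e, hw₂b]
          exact het
  · have hE : ∀ e, e = e₁ ∨ e = e₂ ∨ e = e₃ → e = v p₁ ∨ e = v p₀ ∨ e = p := by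
      intro e he
      by_contra hc
      push_neg at hc
      exact hex ⟨e, he, hc.1, hc.2.1, hc.2.2⟩
    have hh1 := hE e₁ (Or.inl rfl)
    have hh2 := hE e₂ (Or.inr (Or.inl rfl))
    have hh3 := hE e₃ (Or.inr (Or.inr rfl))
    have hps : p ≠ v p₁ := by
      intro hps
      have m : ∀ e, (e = v p₁ ∨ e = v p₀ ∨ e = p) → (e = v p₁ ∨ e = v p₀) := by
        intro e h
        rcases h with h | h | h
        · exact Or.inl h
        · exact Or.inr h
        · exact Or.inl (h.trans hps)
      exact three_two h12 h13 h23 (m e₁ hh1) (m e₂ hh2) (m e₃ hh3)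
    have hpt : p ≠ v p₀ := by
      intro hpt
      have m : ∀ e, (e = v p₁ ∨ e = v p₀ ∨ e = p) → (e = v p₁ ∨ e = v p₀) := by
        intro e h
        rcases h with h | h | h
        · exact Or.inl h
        · exact Or.inr h
        · exact Or.inr (h.trans hpt)
      exact three_two h12 h13 h23 (m e₁ hh1) (m e₂ hh2) (m e₃ hh3)
    have hsE : v p₁ = e₁ ∨ v p₁ = e₂ ∨ v p₁ = e₃ := by
      by_contra hc
      push_neg at hc
      have m1 : e₁ = v p₀ ∨ e₁ = p := by
        rcases hh1 with h | h | h
        · exact absurd h.symm hc.1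
        · exact Or.inl h
        · exact Or.inr h
      have m2 : e₂ = v p₀ ∨ e₂ = p := by
        rcases hh2 with h | h | h
        · exact absurd h.symm hc.2.1
        · exact Or.inl h
        · exact Or.inr h
      have m3 : e₃ = v p₀ ∨ e₃ = p := by
        rcases hh3 with h | h | h
        · exact absurd h.symm hc.2.2
        · exact Or.inl h
        · exact Or.inr h
      exact three_two h12 h13 h23 m1 m2 m3
    obtain ⟨hs, hsG, hs2, hs1, hs0⟩ := hhelp (v p₁) hsE
    obtain ⟨w, hwF, hwid, hwa, hwb⟩ := delta2' hΔ (x := p) (u := v p₂) (y := v p₁) (v := v p₀)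
      (Ne.symm hvp) hst (pair_ne₁ hps hpt) (Or.inl rfl) (Or.inr rfl)
    refine ⟨fun q => w ![hs q, v q], hG w hwF hwid hs hsG v hv, ?_, ?_⟩
    · show w ![hs p₂, v p₂] = p; rw [hs2]; exact hwa
    · show w ![hs p₁, v p₁] ≠ w ![hs p₀, v p₀]
      rw [hs1, hs0, hwid (v p₁), hwb]
      exact hst


private lemma main_lemma {A Q : Type*} [Nonempty Q]
    (F : ∀ n : ℕ, Set ((Fin n → A) → A)) (hΔ : Delta2 F)
    (H : Set (Q → A)) (hH : ClInvariant F H)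
    (f : Q → A)
    (h1 : ∀ q : Q, ∃ h ∈ H, h q = f q)
    (h2 : ∀ p q : Q, p ≠ q → f p ≠ f q → ∃ u ∈ H, u p ≠ u q)
    (h3 : ∀ B : Set A, B.ncard = 2 → ∃ h ∈ H, ∀ q : Q, valuesAt H q ⊆ B → h q = f q) :
    ∀ P : Finset Q, ∃ h ∈ H, ∀ q ∈ P, h q = f q := by
  classical
  suffices hmain : ∀ n : ℕ, ∀ P : Finset Q, P.card ≤ n → ∃ h ∈ H, ∀ q ∈ P, h q = f q by
    exact fun P => hmain P.card P le_rfl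
  intro n
  induction n with
  | zero =>
    intro P hP
    have hPe : P = ∅ := Finset.card_eq_zero.mp (Nat.le_zero.mp hP)
    subst hPe
    obtain ⟨q⟩ := ‹Nonempty Q›
    obtain ⟨h, hh, _⟩ := h1 q
    exact ⟨h, hh, by simp⟩
  | succ n IH =>
    intro P hPcard
    by_contra hcon
    push_neg at hcon
    -- hcon : ∀ h ∈ H, ∃ q ∈ P, h q ≠ f q
    have hcard2 : 2 ≤ P.card := by
      by_contra hlt
      push_neg at hlt
      have h01 : P.card = 0 ∨ P.card = 1 := by omega
      rcases h01 with h0 | h1'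
      · obtain ⟨q⟩ := ‹Nonempty Q›
        obtain ⟨h, hh, _⟩ := h1 q
        obtain ⟨z, hz, _⟩ := hcon h hh
        rw [Finset.card_eq_zero.mp h0] at hz
        exact Finset.notMem_empty z hz
      · obtain ⟨q, rfl⟩ := Finset.card_eq_one.mp h1'
        obtain ⟨h, hh, hq⟩ := h1 q
        obtain ⟨z, hz, hzne⟩ := hcon h hh
        rw [Finset.mem_singleton] at hz
        subst hz
        exact hzne hq
    obtain ⟨q₀, hq₀, r₀, hr₀, hq₀r₀⟩ := Finset.one_lt_card.mp (by omega : 1 < P.card)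
    have witbad : ∀ q ∈ P, ∀ h ∈ H, (∀ r ∈ P, r ≠ q → h r = f r) → h q ≠ f q := by
      intro q hq h hh hag heq
      obtain ⟨z, hzP, hzne⟩ := hcon h hh
      apply hzne
      by_cases hzq : z = q
      · rw [hzq]; exact heq
      · exact hag z hzP hzq
    have wit : ∀ q ∈ P, ∃ h, h ∈ H ∧ (∀ r ∈ P, r ≠ q → h r = f r) ∧ h q ≠ f q := by
      intro q hq
      obtain ⟨h, hh, hagr⟩ := IH (P.erase q)
        (by have := Finset.card_erase_of_mem hq; omega)
      have hag : ∀ r ∈ P, r ≠ q → h r = f r :=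
        fun r hr hrq => hagr r (Finset.mem_erase.mpr ⟨hrq, hr⟩)
      exact ⟨h, hh, hag, witbad q hq h hh hag⟩
    have key : ∀ q ∈ P, ∀ r ∈ P, q ≠ r →
        ∀ h₁ ∈ H, (∀ s ∈ P, s ≠ q → h₁ s = f s) → h₁ q ≠ f q →
        ∀ h₂ ∈ H, (∀ s ∈ P, s ≠ r → h₂ s = f s) → h₂ r ≠ f r →
        ({h₁ q, f q} : Set A) = {f r, h₂ r} := by
      intro q hq r hr hqr h₁ h₁H h₁ag h₁ne h₂ h₂H h₂ag h₂ne
      by_contra hne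
      obtain ⟨w, hwF, hwid, hwa, hwb⟩ := delta2' hΔ (x := h₁ q) (u := f q) (y := f r) (v := h₂ r)
        h₁ne (Ne.symm h₂ne) hne (Or.inr rfl) (Or.inl rfl)
      obtain ⟨z, hzP, hzne⟩ := hcon (fun s => w ![h₁ s, h₂ s]) (comp2 hH hwF h₁H h₂H)
      apply hzne
      by_cases hzq : z = q
      · subst hzq
        show w ![h₁ z, h₂ z] = f z
        rw [h₂ag z hzP hqr]
        exact hwa
      · by_cases hzr : z = r
        · subst hzr
          show w ![h₁ z, h₂ z] = f z
          rw [h₁ag z hzP (Ne.symm hqr)]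
          exact hwb
        · show w ![h₁ z, h₂ z] = f z
          rw [h₁ag z hzP hzq, h₂ag z hzP hzr]
          exact hwid (f z)
    obtain ⟨hstar, hstarH, hstarag, hstarne⟩ := wit q₀ hq₀
    set a := f q₀ with hadef
    set b := hstar q₀ with hbdef
    have hab : a ≠ b := Ne.symm hstarne
    have hB : ∀ q ∈ P, ∀ h ∈ H, (∀ r ∈ P, r ≠ q → h r = f r) → ({f q, h q} : Set A) = {a, b} := by
      intro q hq h hh hag
      by_cases hqq₀ : q = q₀
      · subst hqq₀
        obtain ⟨h', h'H, h'ag, h'ne⟩ := wit r₀ hr₀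
        have k1 := key r₀ hr₀ q hq (fun he => hq₀r₀ (he.symm.trans (by rfl)) ) h' h'H h'ag h'ne h hh hag
          (witbad q hq h hh hag)
        have k2 := key r₀ hr₀ q hq (fun he => hq₀r₀ (he.symm.trans (by rfl))) h' h'H h'ag h'ne
          hstar hstarH hstarag hstarne
        exact k1.symm.trans k2
      · have k := key q hq q₀ hq₀ hqq₀ h hh hag (witbad q hq h hh hag)
          hstar hstarH hstarag hstarne
        exact (Set.pair_comm (f q) (h q)).trans k
    have hBmem : ∀ q ∈ P, ∀ h ∈ H, (∀ r ∈ P, r ≠ q → h r = f r) → h q = a ∨ h q = b := by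
      intro q hq h hh hag
      have hm : h q ∈ ({a, b} : Set A) := by
        rw [← hB q hq h hh hag]
        exact Set.mem_insert_iff.mpr (Or.inr rfl)
      simpa using hm
    have hfB : ∀ q ∈ P, f q = a ∨ f q = b := by
      intro q hq
      obtain ⟨h, hh, hag, _⟩ := wit q hq
      have hm : f q ∈ ({a, b} : Set A) := by
        rw [← hB q hq h hh hag]
        exact Set.mem_insert _ _
      simpa using hm
    have hflip : ∀ q ∈ P, ∀ h ∈ H, (∀ r ∈ P, r ≠ q → h r = f r) →
        (f q = a → h q = b) ∧ (f q = b → h q = a) := by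
      intro q hq h hh hag
      have hne := witbad q hq h hh hag
      have hm := hBmem q hq h hh hag
      constructor
      · intro hfa
        rcases hm with h' | h'
        · exact absurd (h'.trans hfa.symm) hne
        · exact h'
      · intro hfb
        rcases hm with h' | h'
        · exact h'
        · exact absurd (h'.trans hfb.symm) hne
    by_cases hsub : ∀ q ∈ P, valuesAt H q ⊆ ({a, b} : Set A)
    · obtain ⟨h', h'H, h'ag⟩ := h3 {a, b} (Set.ncard_pair hab)
      obtain ⟨z, hz, hzne⟩ := hcon h' h'H
      exact hzne (h'ag z (hsub z hz))
    · push_neg at hsub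
      obtain ⟨p₀, hp₀P, hval⟩ := hsub
      obtain ⟨α, hαmem, hαnot⟩ := Set.not_subset.mp hval
      obtain ⟨g, gH, hgval⟩ := hαmem
      simp only [Set.mem_insert_iff, Set.mem_singleton_iff, not_or] at hαnot
      have hgval' : g p₀ = α := hgval
      have hga : g p₀ ≠ a := by rw [hgval']; exact hαnot.1
      have hgb : g p₀ ≠ b := by rw [hgval']; exact hαnot.2
      obtain ⟨W₀, W₀H, W₀ag, W₀ne⟩ := wit p₀ hp₀P
      -- main claim Φ
      have Φ : ∀ m : ℕ, ∀ S : Finset Q, S.card ≤ m → S ⊆ P.erase p₀ →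
          ∃ x, x ∈ H ∧ (∀ q ∈ S, x q = f q) ∧ x p₀ ≠ a ∧ x p₀ ≠ b := by
        intro m
        induction m with
        | zero =>
          intro S hS0 _
          have hSe : S = ∅ := Finset.card_eq_zero.mp (Nat.le_zero.mp hS0)
          subst hSe
          exact ⟨g, gH, by simp, hga, hgb⟩
        | succ m IHm =>
          intro S hScard hSsub
          rcases S.eq_empty_or_nonempty with rfl | ⟨p₁, hp₁S⟩
          · exact ⟨g, gH, by simp, hga, hgb⟩
          · obtain ⟨x', x'H, x'ag, x'a, x'b⟩ := IHm (S.erase p₁)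
              (by have := Finset.card_erase_of_mem hp₁S; omega)
              ((Finset.erase_subset _ _).trans hSsub)
            by_cases hdone : x' p₁ = f p₁
            · refine ⟨x', x'H, ?_, x'a, x'b⟩
              intro q hq
              by_cases hq1 : q = p₁
              · rw [hq1]; exact hdone
              · exact x'ag q (Finset.mem_erase.mpr ⟨hq1, hq⟩)
            · have hp₁P : p₁ ∈ P := Finset.mem_of_mem_erase (hSsub hp₁S)
              have hp₁p₀ : p₁ ≠ p₀ := (Finset.mem_erase.mp (hSsub hp₁S)).1
              have hfp₁ := hfB p₁ hp₁P
              have hfp₀ := hfB p₀ hp₀P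
              have hW₀p₀ne : W₀ p₀ ≠ f p₀ := witbad p₀ hp₀P W₀ W₀H W₀ag
              have hW₀mem : W₀ p₀ = a ∨ W₀ p₀ = b := hBmem p₀ hp₀P W₀ W₀H W₀ag
              have hW₀p₁ : W₀ p₁ = f p₁ := W₀ag p₁ hp₁P hp₁p₀
              have hγ1 : x' p₀ ≠ f p₁ := by
                rcases hfp₁ with h | h
                · rw [h]; exact x'a
                · rw [h]; exact x'b
              have hγ0 : x' p₀ ≠ f p₀ := by
                rcases hfp₀ with h | h
                · rw [h]; exact x'a
                · rw [h]; exact x'b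
              have hγW₀ : x' p₀ ≠ W₀ p₀ := by
                rcases hW₀mem with h | h
                · rw [h]; exact x'a
                · rw [h]; exact x'b
              by_cases hblock : f p₁ = W₀ p₀ ∧ x' p₁ = x' p₀
              · by_cases hq' : ∃ q', q' ∈ P ∧ q' ∉ S ∧ q' ≠ p₀
                · -- use a fresh witness helper
                  obtain ⟨q', hq'P, hq'S, hq'p₀⟩ := hq'
                  obtain ⟨Wq, WqH, Wqag, _⟩ := wit q' hq'P
                  have hWqp₀ : Wq p₀ = f p₀ := Wqag p₀ hp₀P (Ne.symm hq'p₀)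
                  have hεμ : f p₁ ≠ f p₀ := by rw [hblock.1]; exact hW₀p₀ne
                  have hr : ({f p₁, x' p₁} : Set A) ≠ {f p₀, x' p₀} := by
                    intro hEq
                    have hm1 : x' p₀ ∈ ({f p₁, x' p₁} : Set A) := by
                      rw [hEq]; exact Set.mem_insert_iff.mpr (Or.inr rfl)
                    rcases Set.mem_insert_iff.mp hm1 with hc | hc
                    · exact hγ1 hc
                    · rw [Set.mem_singleton_iff] at hc
                      have hm2 : f p₀ ∈ ({f p₁, x' p₁} : Set A) := by
                        rw [hEq]; exact Set.mem_insert _ _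
                      rcases Set.mem_insert_iff.mp hm2 with hd | hd
                      · exact hεμ hd.symm
                      · rw [Set.mem_singleton_iff] at hd
                        exact hγ0 (hc.trans hd.symm)
                  obtain ⟨w, hwF, hwid, hwa, hwb⟩ := delta2' hΔ
                    (x := f p₁) (u := x' p₁) (y := f p₀) (v := x' p₀)
                    (Ne.symm hdone) (Ne.symm hγ0) hr (Or.inl rfl) (Or.inr rfl)
                  refine ⟨fun q => w ![Wq q, x' q], comp2 hH hwF WqH x'H, ?_, ?_, ?_⟩
                  · intro q hq
                    by_cases hq1 : q = p₁
                    · subst hq1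
                      show w ![Wq q, x' q] = f q
                      rw [Wqag q hp₁P (fun h => hq'S (h ▸ hp₁S))]
                      exact hwa
                    · show w ![Wq q, x' q] = f q
                      rw [Wqag q (Finset.mem_of_mem_erase (hSsub hq)) (fun h => hq'S (h ▸ hq)),
                        x'ag q (Finset.mem_erase.mpr ⟨hq1, hq⟩)]
                      exact hwid (f q)
                  · show w ![Wq p₀, x' p₀] ≠ a
                    rw [hWqp₀, hwb]; exact x'a
                  · show w ![Wq p₀, x' p₀] ≠ b
                    rw [hWqp₀, hwb]; exact x'b
                · -- HARD CASE
                  exfalso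
                  push_neg at hq'
                  have hScov : ∀ q ∈ P, q ≠ p₀ → q ∈ S := by
                    intro q hq hqp
                    by_contra hc
                    exact hqp (hq' q hq hc)
                  have hεμ : f p₁ ≠ f p₀ := by rw [hblock.1]; exact hW₀p₀ne
                  obtain ⟨u, uH, uneq⟩ := h2 p₁ p₀ hp₁p₀ hεμ
                  obtain ⟨W₁, W₁H, W₁ag, W₁ne⟩ := wit p₁ hp₁P
                  have hW₁p₀ : W₁ p₀ = f p₀ := W₁ag p₀ hp₀P (Ne.symm hp₁p₀)
                  have hW₁p₁ : W₁ p₁ = f p₀ := by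
                    rcases hfp₀ with h | h
                    · have hb1 : W₀ p₀ = b := (hflip p₀ hp₀P W₀ W₀H W₀ag).1 h
                      have hfb : f p₁ = b := hblock.1.trans hb1
                      rw [(hflip p₁ hp₁P W₁ W₁H W₁ag).2 hfb, h]
                    · have hb1 : W₀ p₀ = a := (hflip p₀ hp₀P W₀ W₀H W₀ag).2 h
                      have hfa : f p₁ = a := hblock.1.trans hb1
                      rw [(hflip p₁ hp₁P W₁ W₁H W₁ag).1 hfa, h]
                  have done₁ : ∀ z, z ∈ H → (∀ q ∈ S.erase p₁, z q = f q) → z p₁ = f p₁ →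
                      z p₀ = W₀ p₀ := by
                    intro z hz hzag hz1
                    have zag' : ∀ r ∈ P, r ≠ p₀ → z r = f r := by
                      intro r hrP hrp₀
                      by_cases hr1 : r = p₁
                      · rw [hr1]; exact hz1
                      · exact hzag r (Finset.mem_erase.mpr ⟨hr1, hScov r hrP hrp₀⟩)
                    rcases hfp₀ with h | h
                    · rw [(hflip p₀ hp₀P z hz zag').1 h, (hflip p₀ hp₀P W₀ W₀H W₀ag).1 h]
                    · rw [(hflip p₀ hp₀P z hz zag').2 h, (hflip p₀ hp₀P W₀ W₀H W₀ag).2 h]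
                  have done₂ : ∀ z, z ∈ H → (∀ q ∈ S.erase p₁, z q = f q) → z p₀ = f p₀ →
                      z p₁ = f p₀ := by
                    intro z hz hzag hz0
                    have zag'' : ∀ r ∈ P, r ≠ p₁ → z r = f r := by
                      intro r hrP hrp₁
                      by_cases hr0 : r = p₀
                      · rw [hr0]; exact hz0
                      · exact hzag r (Finset.mem_erase.mpr ⟨hrp₁, hScov r hrP hr0⟩)
                    rw [← hW₁p₁]
                    rcases hfp₁ with h | h
                    · rw [(hflip p₁ hp₁P z hz zag'').1 h, (hflip p₁ hp₁P W₁ W₁H W₁ag).1 h]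
                    · rw [(hflip p₁ hp₁P z hz zag'').2 h, (hflip p₁ hp₁P W₁ W₁H W₁ag).2 h]
                  have W₀ag' : ∀ q ∈ S.erase p₁, W₀ q = f q := by
                    intro q hq
                    have hqS := Finset.mem_of_mem_erase hq
                    exact W₀ag q (Finset.mem_of_mem_erase (hSsub hqS))
                      (Finset.mem_erase.mp (hSsub hqS)).1
                  have W₁ag' : ∀ q ∈ S.erase p₁, W₁ q = f q := by
                    intro q hq
                    exact W₁ag q (Finset.mem_of_mem_erase (hSsub (Finset.mem_of_mem_erase hq)))
                      (Finset.mem_erase.mp hq).1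
                  -- Claim 2
                  have C2 : ∀ k : ℕ, ∀ T : Finset Q, T.card ≤ k → T ⊆ S.erase p₁ →
                      ∃ y, y ∈ H ∧ (∀ q ∈ T, y q = f q) ∧ y p₁ ≠ y p₀ := by
                    intro k
                    induction k with
                    | zero =>
                      intro T hT0 _
                      have hTe : T = ∅ := Finset.card_eq_zero.mp (Nat.le_zero.mp hT0)
                      subst hTe
                      exact ⟨u, uH, by simp, uneq⟩
                    | succ k IHk =>
                      intro T hTcard hTsub
                      rcases T.eq_empty_or_nonempty with rfl | ⟨p₂, hp₂T⟩
                      · exact ⟨u, uH, by simp, uneq⟩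
                      · obtain ⟨y', y'H, y'ag, y'ne⟩ := IHk (T.erase p₂)
                          (by have := Finset.card_erase_of_mem hp₂T; omega)
                          ((Finset.erase_subset _ _).trans hTsub)
                        by_cases hy2 : y' p₂ = f p₂
                        · refine ⟨y', y'H, ?_, y'ne⟩
                          intro q hq
                          by_cases hqp₂ : q = p₂
                          · rw [hqp₂]; exact hy2
                          · exact y'ag q (Finset.mem_erase.mpr ⟨hqp₂, hq⟩)
                        · have hp₂S' : p₂ ∈ S.erase p₁ := hTsub hp₂T
                          have hp₂S : p₂ ∈ S := Finset.mem_of_mem_erase hp₂S'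
                          have hp₂P : p₂ ∈ P := Finset.mem_of_mem_erase (hSsub hp₂S)
                          have hp₂p₀ : p₂ ≠ p₀ := (Finset.mem_erase.mp (hSsub hp₂S)).1
                          have hp₂p₁ : p₂ ≠ p₁ := (Finset.mem_erase.mp hp₂S').1
                          set G : Set (Q → A) := {z | z ∈ H ∧ ∀ q ∈ T.erase p₂, z q = f q}
                            with hGdef
                          have hG : ∀ w ∈ F 2, (∀ z : A, w ![z, z] = z) →
                              ∀ g₁ ∈ G, ∀ g₂ ∈ G, (fun q => w ![g₁ q, g₂ q]) ∈ G := by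
                            intro w hwF hwid g₁ hg₁ g₂ hg₂
                            refine ⟨comp2 hH hwF hg₁.1 hg₂.1, ?_⟩
                            intro q hq
                            show w ![g₁ q, g₂ q] = f q
                            rw [hg₁.2 q hq, hg₂.2 q hq]
                            exact hwid (f q)
                          have hsubT' : ∀ q ∈ T.erase p₂, q ∈ S.erase p₁ :=
                            fun q hq => hTsub (Finset.mem_of_mem_erase hq)
                          have hTW₀ : W₀ ∈ G := ⟨W₀H, fun q hq => W₀ag' q (hsubT' q hq)⟩
                          have hTW₁ : W₁ ∈ G := ⟨W₁H, fun q hq => W₁ag' q (hsubT' q hq)⟩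
                          have hTx' : x' ∈ G := ⟨x'H, fun q hq => x'ag q (hsubT' q hq)⟩
                          have hW₀p₂ : W₀ p₂ = f p₂ := W₀ag p₂ hp₂P hp₂p₀
                          have hW₁p₂ : W₁ p₂ = f p₂ := W₁ag p₂ hp₂P hp₂p₁
                          have hx'p₂ : x' p₂ = f p₂ := x'ag p₂ hp₂S'
                          have hhelp : ∀ e, e = f p₁ ∨ e = f p₀ ∨ e = x' p₀ →
                              ∃ h ∈ G, h p₂ = f p₂ ∧ h p₁ = e ∧ h p₀ = e := by
                            rintro e (rfl | rfl | rfl)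
                            · exact ⟨W₀, hTW₀, hW₀p₂, hW₀p₁, hblock.1.symm⟩
                            · exact ⟨W₁, hTW₁, hW₁p₂, hW₁p₁, hW₁p₀⟩
                            · exact ⟨x', hTx', hx'p₂, hblock.2, rfl⟩
                          obtain ⟨z, hzG, hz2, hzne⟩ := pairLemma hΔ G hG p₂ p₁ p₀ (f p₂)
                            (f p₁) (f p₀) (x' p₀) hεμ (Ne.symm hγ1) (Ne.symm hγ0) hhelp
                            y' ⟨y'H, y'ag⟩ hy2 y'ne
                          refine ⟨z, hzG.1, ?_, hzne⟩
                          intro q hq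
                          by_cases hqp₂ : q = p₂
                          · rw [hqp₂]; exact hz2
                          · exact hzG.2 q (Finset.mem_erase.mpr ⟨hqp₂, hq⟩)
                  obtain ⟨y, yH, yag, yne⟩ := C2 (S.erase p₁).card (S.erase p₁) le_rfl
                    (Finset.Subset.refl _)
                  -- chase
                  by_cases c1 : y p₁ = f p₁
                  · exact yne (by rw [c1, done₁ y yH yag c1, ← hblock.1])
                  · by_cases c3 : y p₀ = f p₁
                    · by_cases c4 : y p₁ = f p₀
                      · -- y at (p₁,p₀) = (f p₀, f p₁)
                        obtain ⟨w, hwF, hwid, hwa, hwb⟩ := delta2' hΔ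
                          (x := f p₀) (u := x' p₁) (y := f p₁) (v := x' p₀)
                          (by rw [hblock.2]; exact Ne.symm hγ0)
                          (Ne.symm hγ1)
                          (pair_ne₁ (Ne.symm hεμ) (Ne.symm hγ0))
                          (Or.inr rfl) (Or.inl rfl)
                        have hzH : (fun q => w ![y q, x' q]) ∈ H := comp2 hH hwF yH x'H
                        have hzag : ∀ q ∈ S.erase p₁, w ![y q, x' q] = f q := by
                          intro q hq
                          rw [yag q hq, x'ag q hq]
                          exact hwid (f q)
                        have hz1 : w ![y p₁, x' p₁] = x' p₁ := by rw [c4]; exact hwa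
                        have hz0 : w ![y p₀, x' p₀] = f p₁ := by rw [c3]; exact hwb
                        obtain ⟨w', hw'F, hw'id, hw'a, hw'b⟩ := delta2' hΔ
                          (x := x' p₀) (u := f p₀) (y := f p₁) (v := f p₀)
                          hγ0 hεμ
                          (pair_ne₁ hγ1 hγ0)
                          (Or.inl rfl) (Or.inr rfl)
                        have hz'H : (fun q => w' ![w ![y q, x' q], W₁ q]) ∈ H :=
                          comp2 hH hw'F hzH W₁H
                        have hz'ag : ∀ q ∈ S.erase p₁, w' ![w ![y q, x' q], W₁ q] = f q := by
                          intro q hq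
                          rw [hzag q hq, W₁ag' q hq]
                          exact hw'id (f q)
                        have hfin := done₂ _ hz'H hz'ag (by
                          show w' ![w ![y p₀, x' p₀], W₁ p₀] = f p₀
                          rw [hz0, hW₁p₀]; exact hw'b)
                        have : w' ![w ![y p₁, x' p₁], W₁ p₁] = x' p₀ := by
                          rw [hz1, hblock.2, hW₁p₁]; exact hw'a
                        exact hγ0 (this.symm.trans hfin)
                      · -- y at (p₁,p₀) = (s, f p₁) with s ≠ f p₁, s ≠ f p₀
                        obtain ⟨w, hwF, hwid, hwa, hwb⟩ := delta2' hΔ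
                          (x := y p₁) (u := f p₀) (y := f p₁) (v := f p₀)
                          c4 hεμ
                          (pair_ne₁ c1 c4)
                          (Or.inl rfl) (Or.inr rfl)
                        have hzH : (fun q => w ![y q, W₁ q]) ∈ H := comp2 hH hwF yH W₁H
                        have hzag : ∀ q ∈ S.erase p₁, w ![y q, W₁ q] = f q := by
                          intro q hq
                          rw [yag q hq, W₁ag' q hq]
                          exact hwid (f q)
                        have hfin := done₂ _ hzH hzag (by
                          show w ![y p₀, W₁ p₀] = f p₀
                          rw [c3, hW₁p₀]; exact hwb)
                        have : w ![y p₁, W₁ p₁] = y p₁ := by rw [hW₁p₁]; exact hwa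
                        exact c4 (this.symm.trans hfin)
                    · -- y p₀ ≠ f p₁ and y p₁ ≠ f p₁
                      obtain ⟨w, hwF, hwid, hwa, hwb⟩ := delta2' hΔ
                        (x := y p₁) (u := f p₁) (y := y p₀) (v := f p₁)
                        c1 c3
                        (pair_ne₁ yne c1)
                        (Or.inr rfl) (Or.inl rfl)
                      have hzH : (fun q => w ![y q, W₀ q]) ∈ H := comp2 hH hwF yH W₀H
                      have hzag : ∀ q ∈ S.erase p₁, w ![y q, W₀ q] = f q := by
                        intro q hq
                        rw [yag q hq, W₀ag' q hq]
                        exact hwid (f q)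
                      have hfin := done₁ _ hzH hzag (by
                        show w ![y p₁, W₀ p₁] = f p₁
                        rw [hW₀p₁]; exact hwa)
                      have : w ![y p₀, W₀ p₀] = y p₀ := by rw [← hblock.1]; exact hwb
                      exact c3 (this.symm.trans (hfin.trans hblock.1.symm))
              · -- not blocked: use W₀ as helper
                have hr : ({f p₁, x' p₁} : Set A) ≠ {W₀ p₀, x' p₀} := by
                  intro hEq
                  have hm1 : x' p₀ ∈ ({f p₁, x' p₁} : Set A) := by
                    rw [hEq]; exact Set.mem_insert_iff.mpr (Or.inr rfl)
                  rcases Set.mem_insert_iff.mp hm1 with hc | hc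
                  · exact hγ1 hc
                  · rw [Set.mem_singleton_iff] at hc
                    have hm2 : W₀ p₀ ∈ ({f p₁, x' p₁} : Set A) := by
                      rw [hEq]; exact Set.mem_insert _ _
                    rcases Set.mem_insert_iff.mp hm2 with hd | hd
                    · exact hblock ⟨hd.symm, hc.symm⟩
                    · rw [Set.mem_singleton_iff] at hd
                      exact hγW₀ (hc.trans hd.symm)
                obtain ⟨w, hwF, hwid, hwa, hwb⟩ := delta2' hΔ
                  (x := f p₁) (u := x' p₁) (y := W₀ p₀) (v := x' p₀)
                  (Ne.symm hdone) (Ne.symm hγW₀) hr (Or.inl rfl) (Or.inr rfl)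
                refine ⟨fun q => w ![W₀ q, x' q], comp2 hH hwF W₀H x'H, ?_, ?_, ?_⟩
                · intro q hq
                  by_cases hq1 : q = p₁
                  · subst hq1
                    show w ![W₀ q, x' q] = f q
                    rw [hW₀p₁]
                    exact hwa
                  · show w ![W₀ q, x' q] = f q
                    rw [W₀ag q (Finset.mem_of_mem_erase (hSsub hq)) (Finset.mem_erase.mp (hSsub hq)).1,
                      x'ag q (Finset.mem_erase.mpr ⟨hq1, hq⟩)]
                    exact hwid (f q)
                · show w ![W₀ p₀, x' p₀] ≠ a
                  rw [hwb]; exact x'a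
                · show w ![W₀ p₀, x' p₀] ≠ b
                  rw [hwb]; exact x'b
      -- conclude
      obtain ⟨x, xH, xag, xa, xb⟩ := Φ (P.erase p₀).card (P.erase p₀) le_rfl
        (Finset.Subset.refl _)
      have hxag : ∀ r ∈ P, r ≠ p₀ → x r = f r :=
        fun r hr hrp => xag r (Finset.mem_erase.mpr ⟨hrp, hr⟩)
      rcases hBmem p₀ hp₀P x xH hxag with h | h
      · exact xa h
      · exact xb h

theorem stmt_18 {A Q : Type*} [Finite A] [Nonempty A] [Finite Q] [Nonempty Q]
    (F : ∀ n : ℕ, Set ((Fin n → A) → A)) (hF : IsClone F) (hΔ : Delta2 F)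
    (H : Set (Q → A)) (hH : ClInvariant F H) :
    -- the decomposition family: singletons, identified pairs, and the sets Q^{[B]}_H
    let 𝓡 : Set (Set Q) := {R | (∃ q : Q, R = {q}) ∨
      (∃ p q : Q, p ≠ q ∧ R = {p, q} ∧ ∀ h ∈ H, h p = h q) ∨
      (∃ B : Set A, B.ncard = 2 ∧ R = {q : Q | valuesAt H q ⊆ B})}
    H = {f : Q → A | ∀ R ∈ 𝓡, restrictTo R f ∈ restrictTo R '' H} := by
  classical
  intro 𝓡
  letI : Fintype Q := Fintype.ofFinite Q
  ext f
  simp only [Set.mem_setOf_eq]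
  constructor
  · intro hf R _
    exact ⟨f, hf, rfl⟩
  · intro hf
    have h1 : ∀ q : Q, ∃ h ∈ H, h q = f q := by
      intro q
      obtain ⟨h, hh, he⟩ := hf {q} (Or.inl ⟨q, rfl⟩)
      exact ⟨h, hh, congrFun he ⟨q, rfl⟩⟩
    have h2' : ∀ p q : Q, p ≠ q → f p ≠ f q → ∃ u ∈ H, u p ≠ u q := by
      intro p q hpq hf2
      by_contra hc
      push_neg at hc
      obtain ⟨h, hh, he⟩ := hf {p, q} (Or.inr (Or.inl ⟨p, q, hpq, rfl, hc⟩))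
      have hp : h p = f p := congrFun he ⟨p, Or.inl rfl⟩
      have hq : h q = f q := congrFun he ⟨q, Or.inr rfl⟩
      exact hf2 (by rw [← hp, ← hq]; exact hc h hh)
    have h3 : ∀ B : Set A, B.ncard = 2 → ∃ h ∈ H, ∀ q : Q, valuesAt H q ⊆ B → h q = f q := by
      intro B hB2
      obtain ⟨h, hh, he⟩ := hf {q : Q | valuesAt H q ⊆ B} (Or.inr (Or.inr ⟨B, hB2, rfl⟩))
      exact ⟨h, hh, fun q hq => congrFun he ⟨q, hq⟩⟩
    obtain ⟨h, hh, hag⟩ := main_lemma F hΔ H hH f h1 h2' h3 Finset.univ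
    have hhf : h = f := funext fun q => hag q (Finset.mem_univ q)
    exact hhf ▸ hh
end

section
/- Let A and Q be finite nonempty sets, n ≥ 3, and F a clone on A satisfying Δ^s_n. A set H ⊆ A^Q is a Q-invariant set of F if and only if: (1) H|_P is a P-invariant set of F for every P which is a singleton, or a pair {p,q} for which some permutation σ of A satisfies h(q)=σ(h(p)) for all h ∈ H, or the set Q^{(n)}_H = {q ∈ Q : |H(q)| < n}; and (2) H is decomposable over this same family of subsets of Q. -/
open Function

section Aux

lemma exists_third {n : ℕ} (hn : 3 ≤ n) (i j : Fin n) : ∃ l : Fin n, l ≠ i ∧ l ≠ j := by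
  classical
  by_contra hc
  push_neg at hc
  have hsub : (Finset.univ : Finset (Fin n)) ⊆ {i, j} := by
    intro l _
    by_cases h : l = i
    · simp [h]
    · simp [hc l h]
  have h1 := Finset.card_le_card hsub
  have h2 : ({i, j} : Finset (Fin n)).card ≤ 2 := by
    apply le_trans (Finset.card_insert_le _ _)
    simp
  simp [Finset.card_univ] at h1
  omega

lemma injOn_pair {α β : Type*} [DecidableEq α] {i j : α} {a b : β} (hab : a ≠ b) :
    Set.InjOn (fun k => if k = i then a else b) ↑({i, j} : Finset α) := by
  intro x hx y hy hxy
  simp only at hxy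
  by_cases hxi : x = i <;> by_cases hyi : y = i
  · rw [hxi, hyi]
  · rw [if_pos hxi, if_neg hyi] at hxy; exact absurd hxy hab
  · rw [if_neg hxi, if_pos hyi] at hxy; exact absurd hxy.symm hab
  · simp only [Finset.coe_insert, Set.mem_insert_iff, Finset.coe_singleton,
      Set.mem_singleton_iff] at hx hy
    rcases hx with rfl | rfl
    · exact absurd rfl hxi
    · rcases hy with rfl | rfl
      · exact absurd rfl hyi
      · rfl

lemma injOn_triple {α β : Type*} [DecidableEq α] {i j l : α} {a b c : β}
    (hab : a ≠ b) (hac : a ≠ c) (hbc : b ≠ c) :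
    Set.InjOn (fun k => if k = i then a else if k = j then b else c)
      ↑({i, j, l} : Finset α) := by
  intro x hx y hy hxy
  simp only at hxy
  by_cases hxi : x = i <;> by_cases hyi : y = i
  · rw [hxi, hyi]
  · rw [if_pos hxi, if_neg hyi] at hxy
    by_cases hyj : y = j
    · rw [if_pos hyj] at hxy; exact absurd hxy hab
    · rw [if_neg hyj] at hxy; exact absurd hxy hac
  · rw [if_neg hxi, if_pos hyi] at hxy
    by_cases hxj : x = j
    · rw [if_pos hxj] at hxy; exact absurd hxy.symm hab
    · rw [if_neg hxj] at hxy; exact absurd hxy.symm hac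
  · rw [if_neg hxi, if_neg hyi] at hxy
    by_cases hxj : x = j <;> by_cases hyj : y = j
    · rw [hxj, hyj]
    · rw [if_pos hxj, if_neg hyj] at hxy; exact absurd hxy hbc
    · rw [if_neg hxj, if_pos hyj] at hxy; exact absurd hxy.symm hbc
    · simp only [Finset.coe_insert, Set.mem_insert_iff, Finset.coe_singleton,
        Set.mem_singleton_iff] at hx hy
      rcases hx with rfl | rfl | rfl
      · exact absurd rfl hxi
      · exact absurd rfl hxj
      · rcases hy with rfl | rfl | rfl
        · exact absurd rfl hyi
        · exact absurd rfl hyj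
        · rfl

lemma ext_tuple {A : Type*} [Finite A] {n : ℕ} {S : Set A} (hS : n ≤ S.ncard)
    (K : Finset (Fin n)) (c₀ : Fin n → A) (hinj : Set.InjOn c₀ ↑K)
    (hval : ∀ k ∈ K, c₀ k ∈ S) :
    ∃ c : Fin n → A, Function.Injective c ∧ (∀ k, c k ∈ S) ∧ ∀ k ∈ K, c k = c₀ k := by
  classical
  have hSfin : S.Finite := Set.toFinite S
  set SF := hSfin.toFinset with hSF
  have hV : K.image c₀ ⊆ SF := by
    intro x hx
    obtain ⟨k, hk, rfl⟩ := Finset.mem_image.mp hx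
    exact hSfin.mem_toFinset.mpr (hval k hk)
  have hcardV : (K.image c₀).card = K.card := Finset.card_image_of_injOn hinj
  have hSFcard : SF.card = S.ncard := (Set.ncard_eq_toFinset_card S hSfin).symm
  have ht : n - K.card ≤ (SF \ K.image c₀).card := by
    rw [Finset.card_sdiff_of_subset hV, hcardV, hSFcard]
    omega
  have hemb : Nonempty ((↥(Kᶜ : Finset (Fin n))) ↪ ↥(SF \ K.image c₀)) := by
    apply Function.Embedding.nonempty_of_card_le
    simp only [Fintype.card_coe, Finset.card_compl, Fintype.card_fin]
    exact ht
  obtain ⟨e⟩ := hemb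
  refine ⟨fun k => if hk : k ∈ K then c₀ k else
    ↑(e ⟨k, Finset.mem_compl.mpr hk⟩), ?_, ?_, ?_⟩
  · intro k₁ k₂ hEq
    simp only at hEq
    by_cases h₁ : k₁ ∈ K <;> by_cases h₂ : k₂ ∈ K
    · rw [dif_pos h₁, dif_pos h₂] at hEq
      exact hinj (Finset.mem_coe.mpr h₁) (Finset.mem_coe.mpr h₂) hEq
    · rw [dif_pos h₁, dif_neg h₂] at hEq
      have hm := (e ⟨k₂, Finset.mem_compl.mpr h₂⟩).2
      rw [Finset.mem_sdiff] at hm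
      exact absurd (hEq ▸ Finset.mem_image_of_mem c₀ h₁) hm.2
    · rw [dif_neg h₁, dif_pos h₂] at hEq
      have hm := (e ⟨k₁, Finset.mem_compl.mpr h₁⟩).2
      rw [Finset.mem_sdiff] at hm
      exact absurd (hEq ▸ Finset.mem_image_of_mem c₀ h₂) hm.2
    · rw [dif_neg h₁, dif_neg h₂] at hEq
      have := e.injective (Subtype.ext hEq)
      have := congrArg Subtype.val this
      simpa using this
  · intro k
    simp only
    by_cases hk : k ∈ K
    · rw [dif_pos hk]; exact hval k hk
    · rw [dif_neg hk]
      have hm := (e ⟨k, Finset.mem_compl.mpr hk⟩).2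
      rw [Finset.mem_sdiff] at hm
      exact hSfin.mem_toFinset.mp hm.1
  · intro k hk
    simp only
    rw [dif_pos hk]

lemma lemW {A Q : Type*} [Finite A] {n : ℕ} (hn : 3 ≤ n) {i : Fin n}
    {Fn : Set ((Fin n → A) → A)} {H : Set (Q → A)}
    (hInvn : ∀ s ∈ Fn, ClPreserves s H)
    (hi : ∀ a : Fin n → A, Function.Injective a → ∀ j : Fin n,
      ∃ s ∈ Fn, s a = a j ∧ ∀ x : Fin n → A, ¬ Function.Injective x → s x = x i)
    (q p : Q) (hq : n ≤ (valuesAt H q).ncard)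
    (hunl : ¬ ∃ σ : Equiv.Perm A, ∀ f ∈ H, f q = σ (f p)) :
    ∃ u ∈ H, ∃ v ∈ H, u p = v p ∧ u q ≠ v q := by
  classical
  by_contra hcon
  push_neg at hcon
  -- hcon : ∀ u ∈ H, ∀ v ∈ H, u p = v p → u q = v q
  by_cases hinj2 : ∀ f₁ ∈ H, ∀ f₂ ∈ H, f₁ q = f₂ q → f₁ p = f₂ p
  · -- build a permutation, contradict hunl
    set Hp := valuesAt H p with hHp
    set Hq := valuesAt H q with hHq
    have wp : ∀ x : ↥Hp, ∃ f, f ∈ H ∧ f p = ↑x := by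
      rintro ⟨x, f, hf, rfl⟩; exact ⟨f, hf, rfl⟩
    have wq : ∀ y : ↥Hq, ∃ f, f ∈ H ∧ f q = ↑y := by
      rintro ⟨y, f, hf, rfl⟩; exact ⟨f, hf, rfl⟩
    choose fp hfpH hfpp using wp
    choose gq hgqH hgqq using wq
    have he : ∃ e : ↥Hp ≃ ↥Hq, ∀ x : ↥Hp, ↑(e x) = fp x q := by
      refine ⟨{ toFun := fun x => ⟨fp x q, ⟨fp x, hfpH x, rfl⟩⟩
                invFun := fun y => ⟨gq y p, ⟨gq y, hgqH y, rfl⟩⟩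
                left_inv := ?_
                right_inv := ?_ }, fun x => rfl⟩
      · intro x
        apply Subtype.ext
        show gq ⟨fp x q, _⟩ p = ↑x
        rw [← hfpp x]
        exact hinj2 _ (hgqH _) _ (hfpH x) (hgqq _)
      · intro y
        apply Subtype.ext
        show fp ⟨gq y p, _⟩ q = ↑y
        rw [← hgqq y]
        exact hcon _ (hfpH _) _ (hgqH y) (hfpp _)
    obtain ⟨e, he⟩ := he
    have hcard : Nat.card ↥(Hpᶜ) = Nat.card ↥(Hqᶜ) := by
      have h1 : Hp.ncard + Hpᶜ.ncard = Nat.card A := Set.ncard_add_ncard_compl Hp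
      have h2 : Hq.ncard + Hqᶜ.ncard = Nat.card A := Set.ncard_add_ncard_compl Hq
      have h3 : Hp.ncard = Hq.ncard := by
        rw [← Nat.card_coe_set_eq, ← Nat.card_coe_set_eq]
        exact Nat.card_congr e
      rw [Nat.card_coe_set_eq, Nat.card_coe_set_eq]
      omega
    obtain ⟨e'⟩ := Finite.card_eq.mp hcard
    set σ : Equiv.Perm A :=
      ((Equiv.sumCompl (· ∈ Hp)).symm.trans ((e.sumCongr e').trans
        (Equiv.sumCompl (· ∈ Hq)))) with hσ
    apply hunl
    refine ⟨σ, fun f hf => ?_⟩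
    have hfp : f p ∈ Hp := ⟨f, hf, rfl⟩
    have hsum : (Equiv.sumCompl (· ∈ Hp)).symm (f p) = Sum.inl ⟨f p, hfp⟩ :=
      Equiv.sumCompl_symm_apply_of_pos (p := (· ∈ Hp)) hfp
    have : σ (f p) = fp ⟨f p, hfp⟩ q := by
      rw [hσ]
      simp only [Equiv.trans_apply]
      rw [hsum]
      exact he _
    rw [this]
    exact (hcon _ (hfpH _) _ hf (hfpp _)).symm
  · push_neg at hinj2
    obtain ⟨f₁, hf₁, f₂, hf₂, hfq, hfp⟩ := hinj2
    -- |Hp| ≥ n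
    have hHpcard : n ≤ (valuesAt H p).ncard := by
      refine le_trans hq (Set.ncard_le_ncard_of_injOn
        (fun c => if h : ∃ f, f ∈ H ∧ f q = c then h.choose p else c) ?_ ?_ (Set.toFinite _))
      · rintro c ⟨f, hf, rfl⟩
        have hex : ∃ g, g ∈ H ∧ g q = f q := ⟨f, hf, rfl⟩
        simp only
        rw [dif_pos hex]
        exact ⟨hex.choose, hex.choose_spec.1, rfl⟩
      · rintro c₁ ⟨g₁, hg₁, rfl⟩ c₂ ⟨g₂, hg₂, rfl⟩ hcc
        have hex₁ : ∃ g, g ∈ H ∧ g q = g₁ q := ⟨g₁, hg₁, rfl⟩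
        have hex₂ : ∃ g, g ∈ H ∧ g q = g₂ q := ⟨g₂, hg₂, rfl⟩
        simp only at hcc
        rw [dif_pos hex₁, dif_pos hex₂] at hcc
        have h1 := hcon _ hex₁.choose_spec.1 _ hex₂.choose_spec.1 hcc
        rw [hex₁.choose_spec.2, hex₂.choose_spec.2] at h1
        exact h1
    -- key claim
    have key : ∀ g ∈ H, g q = f₁ q := by
      intro g hg
      by_cases hy1 : g p = f₁ p
      · exact hcon g hg f₁ hf₁ hy1
      by_cases hy2 : g p = f₂ p
      · rw [hcon g hg f₂ hf₂ hy2, hfq]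
      obtain ⟨l, hli, -⟩ := exists_third hn i i
      obtain ⟨j, hji, hjl⟩ := exists_third hn i l
      have hinjOn := injOn_triple (i := i) (j := l) (l := j)
        (a := f₁ p) (b := f₂ p) (c := g p) hfp (Ne.symm hy1) (Ne.symm hy2)
      obtain ⟨a, hainj, haS, haK⟩ := ext_tuple hHpcard {i, l, j}
        (fun k => if k = i then f₁ p else if k = l then f₂ p else g p) hinjOn
        (by
          intro k hk
          split_ifs
          · exact ⟨f₁, hf₁, rfl⟩
          · exact ⟨f₂, hf₂, rfl⟩
          · exact ⟨g, hg, rfl⟩)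
      have hai : a i = f₁ p := by
        rw [haK i (by simp)]; simp
      have hal : a l = f₂ p := by
        rw [haK l (by simp)]; simp [hli]
      have haj : a j = g p := by
        rw [haK j (by simp)]; simp [hji, hjl]
      have hw : ∀ k : Fin n, ∃ f, f ∈ H ∧ f p = a k := by
        intro k
        obtain ⟨f, hf, hfpk⟩ := haS k
        exact ⟨f, hf, hfpk⟩
      choose w hwH hwp using hw
      obtain ⟨s, hsF, hsa, hsni⟩ := hi a hainj j
      set r : Q → A := fun t => s fun k => w k t with hr
      have hrH : r ∈ H := hInvn s hsF w hwH
      have hrp : r p = g p := by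
        have : (fun k => w k p) = a := funext fun k => hwp k
        rw [hr]; simp only [this, hsa, haj]
      have hrq : r q = f₁ q := by
        have hni : ¬ Function.Injective (fun k => w k q) := by
          intro hI
          have h1 : w i q = f₁ q := by
            rw [hcon _ (hwH i) _ hf₁ ((hwp i).trans hai)]
          have h2 : w l q = f₂ q := by
            rw [hcon _ (hwH l) _ hf₂ ((hwp l).trans hal)]
          have : w i q = w l q := by rw [h1, h2, hfq]
          exact Ne.symm hli (hI this)
        rw [hr]
        simp only [hsni _ hni]
        rw [hcon _ (hwH i) _ hf₁ ((hwp i).trans hai)]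
      exact (hcon g hg r hrH (hrp.symm)).trans hrq
    -- contradiction with |Hq| ≥ n
    have hsub : valuesAt H q ⊆ {f₁ q} := by
      rintro c ⟨g, hg, rfl⟩
      exact key g hg
    have := Set.ncard_le_ncard hsub (Set.toFinite _)
    rw [Set.ncard_singleton] at this
    omega

lemma lemS {A Q : Type*} [Finite A] {n : ℕ} (hn : 3 ≤ n) {i : Fin n}
    {Fn : Set ((Fin n → A) → A)} {H : Set (Q → A)}
    (hInvn : ∀ s ∈ Fn, ClPreserves s H)
    (hi : ∀ a : Fin n → A, Function.Injective a → ∀ j : Fin n,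
      ∃ s ∈ Fn, s a = a j ∧ ∀ x : Fin n → A, ¬ Function.Injective x → s x = x i)
    (q : Q) (hq : n ≤ (valuesAt H q).ncard) :
    ∀ T : Finset Q, q ∉ T →
      (∀ p ∈ T, ¬ ∃ σ : Equiv.Perm A, ∀ f ∈ H, f q = σ (f p)) →
      ∀ h ∈ H, ∀ b ∈ valuesAt H q,
        ∃ h' ∈ H, (∀ t ∈ T, h' t = h t) ∧ h' q = b := by
  classical
  intro T
  induction T using Finset.induction_on with
  | empty =>
    intro _ _ h hh b hb
    obtain ⟨f, hf, rfl⟩ := hb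
    exact ⟨f, hf, fun t ht => absurd ht (Finset.notMem_empty t), rfl⟩
  | @insert p T hpT IH =>
    intro hqT hunl h hh b hb
    have hqT' : q ∉ T := fun hx => hqT (Finset.mem_insert_of_mem hx)
    have hqp : q ≠ p := fun hx => hqT (hx ▸ Finset.mem_insert_self p T)
    have hunlT : ∀ p' ∈ T, ¬ ∃ σ : Equiv.Perm A, ∀ f ∈ H, f q = σ (f p') :=
      fun p' hp' => hunl p' (Finset.mem_insert_of_mem hp')
    have hunlp : ¬ ∃ σ : Equiv.Perm A, ∀ f ∈ H, f q = σ (f p) :=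
      hunl p (Finset.mem_insert_self p T)
    have surj : ∀ c ∈ valuesAt H q,
        ∃ f, f ∈ H ∧ (∀ t ∈ T, f t = h t) ∧ f q = c := by
      intro c hc
      obtain ⟨f, hf, hT, hqv⟩ := IH hqT' hunlT h hh c hc
      exact ⟨f, hf, hT, hqv⟩
    by_cases hbh : b = h q
    · exact ⟨h, hh, fun t _ => rfl, hbh.symm⟩
    -- Step 1 : produce u', v' in the fiber with u' p = v' p, u' q ≠ v' q
    obtain ⟨u, hu, v, hv, huvp, huvq⟩ := lemW hn hInvn hi q p hq hunlp
    obtain ⟨j₀, hj₀i, -⟩ := exists_third hn i i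
    obtain ⟨l₀, hl₀i, hl₀j₀⟩ := exists_third hn i j₀
    obtain ⟨c, hcinj, hcS, hcK⟩ := ext_tuple hq {j₀, l₀}
      (fun k => if k = j₀ then u q else v q) (injOn_pair huvq)
      (by
        intro k hk
        split_ifs
        · exact ⟨u, hu, rfl⟩
        · exact ⟨v, hv, rfl⟩)
    have hcj₀ : c j₀ = u q := by rw [hcK j₀ (by simp)]; simp
    have hcl₀ : c l₀ = v q := by rw [hcK l₀ (by simp)]; simp [hl₀j₀]
    choose g hgH hgT hgq using fun k => surj (c k) (hcS k)
    set X : Fin n → Q → A := Function.update g j₀ u with hX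
    have hXH : ∀ k, X k ∈ H := by
      intro k
      by_cases hk : k = j₀
      · rw [hX, hk, Function.update_self]; exact hu
      · rw [hX, Function.update_of_ne hk]; exact hgH k
    have hXq : (fun k => X k q) = c := by
      funext k
      by_cases hk : k = j₀
      · rw [hX, hk, Function.update_self, ← hcj₀]
      · rw [hX, Function.update_of_ne hk]; exact hgq k
    obtain ⟨s, hsF, hsa, hsni⟩ := hi c hcinj j₀
    set u' : Q → A := fun t => s fun k => X k t with hu'
    have hu'H : u' ∈ H := hInvn s hsF X hXH
    set Y : Fin n → Q → A := Function.update g j₀ v with hY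
    have hYH : ∀ k, Y k ∈ H := by
      intro k
      by_cases hk : k = j₀
      · rw [hY, hk, Function.update_self]; exact hv
      · rw [hY, Function.update_of_ne hk]; exact hgH k
    set v' : Q → A := fun t => s fun k => Y k t with hv'
    have hv'H : v' ∈ H := hInvn s hsF Y hYH
    have hXiT : ∀ t ∈ T, X i t = h t := by
      intro t ht; rw [hX, Function.update_of_ne hj₀i.symm]; exact hgT i t ht
    have hXl₀T : ∀ t ∈ T, X l₀ t = h t := by
      intro t ht; rw [hX, Function.update_of_ne hl₀j₀]; exact hgT l₀ t ht
    have hYiT : ∀ t ∈ T, Y i t = h t := by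
      intro t ht; rw [hY, Function.update_of_ne hj₀i.symm]; exact hgT i t ht
    have hYl₀T : ∀ t ∈ T, Y l₀ t = h t := by
      intro t ht; rw [hY, Function.update_of_ne hl₀j₀]; exact hgT l₀ t ht
    have hu'T : ∀ t ∈ T, u' t = h t := by
      intro t ht
      have hni : ¬ Function.Injective (fun k => X k t) := by
        intro hI
        exact hl₀i (hI ((hXl₀T t ht).trans (hXiT t ht).symm))
      rw [hu']
      simp only [hsni _ hni]
      exact hXiT t ht
    have hv'T : ∀ t ∈ T, v' t = h t := by
      intro t ht
      have hni : ¬ Function.Injective (fun k => Y k t) := by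
        intro hI
        exact hl₀i (hI ((hYl₀T t ht).trans (hYiT t ht).symm))
      rw [hv']
      simp only [hsni _ hni]
      exact hYiT t ht
    have hu'q : u' q = u q := by
      rw [hu']
      simp only [hXq]  -- (fun k => X k q) = c
      rw [hsa, hcj₀]
    have hv'q : v' q = c i := by
      have hYj₀q : Y j₀ q = v q := by rw [hY, Function.update_self]
      have hYl₀q : Y l₀ q = v q := by
        rw [hY, Function.update_of_ne hl₀j₀]; rw [hgq l₀, hcl₀]
      have hni : ¬ Function.Injective (fun k => Y k q) := by
        intro hI
        exact hl₀j₀ (hI (hYl₀q.trans hYj₀q.symm))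
      rw [hv']
      simp only [hsni _ hni]
      rw [hY, Function.update_of_ne hj₀i.symm, hgq i]
    have hu'v'q : u' q ≠ v' q := by
      rw [hu'q, hv'q, ← hcj₀]
      exact fun hx => hj₀i (hcinj hx)
    have hu'v'p : u' p = v' p := by
      show s (fun k => X k p) = s (fun k => Y k p)
      congr 1
      funext k
      by_cases hk : k = j₀
      · rw [hX, hY, hk, Function.update_self, Function.update_self, huvp]
      · rw [hX, hY, Function.update_of_ne hk, Function.update_of_ne hk]
    -- Step 2a : saturation
    have sat : ∀ cv ∈ valuesAt H q,
        ∃ f, f ∈ H ∧ (∀ t ∈ T, f t = h t) ∧ f p = u' p ∧ f q = cv := by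
      intro cv hcv
      by_cases h1 : cv = u' q
      · exact ⟨u', hu'H, hu'T, rfl, h1.symm⟩
      by_cases h2 : cv = v' q
      · exact ⟨v', hv'H, hv'T, hu'v'p.symm, h2.symm⟩
      obtain ⟨k₂, hk₂i, -⟩ := exists_third hn i i
      obtain ⟨j₁, hj₁i, hj₁k₂⟩ := exists_third hn i k₂
      obtain ⟨c', hc'inj, hc'S, hc'K⟩ := ext_tuple hq {i, k₂, j₁}
        (fun k => if k = i then u' q else if k = k₂ then v' q else cv)
        (injOn_triple hu'v'q (Ne.symm h1) (Ne.symm h2))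
        (by
          intro k hk
          split_ifs
          · exact ⟨u', hu'H, rfl⟩
          · exact ⟨v', hv'H, rfl⟩
          · exact hcv)
      have hc'i : c' i = u' q := by rw [hc'K i (by simp)]; simp
      have hc'k₂ : c' k₂ = v' q := by rw [hc'K k₂ (by simp)]; simp [hk₂i]
      have hc'j₁ : c' j₁ = cv := by rw [hc'K j₁ (by simp)]; simp [hj₁i, hj₁k₂]
      choose g' hg'H hg'T hg'q using fun k => surj (c' k) (hc'S k)
      set X' : Fin n → Q → A :=
        Function.update (Function.update g' i u') k₂ v' with hX'
      have hX'i : X' i = u' := by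
        rw [hX', Function.update_of_ne hk₂i.symm, Function.update_self]
      have hX'k₂ : X' k₂ = v' := by rw [hX', Function.update_self]
      have hX'other : ∀ k, k ≠ i → k ≠ k₂ → X' k = g' k := by
        intro k hki hkk₂
        rw [hX', Function.update_of_ne hkk₂, Function.update_of_ne hki]
      have hX'H : ∀ k, X' k ∈ H := by
        intro k
        by_cases hki : k = i
        · rw [hki, hX'i]; exact hu'H
        by_cases hkk₂ : k = k₂
        · rw [hkk₂, hX'k₂]; exact hv'H
        · rw [hX'other k hki hkk₂]; exact hg'H k
      have hX'q : (fun k => X' k q) = c' := by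
        funext k
        by_cases hki : k = i
        · rw [hki, hX'i]; exact hc'i.symm
        by_cases hkk₂ : k = k₂
        · rw [hkk₂, hX'k₂, hc'k₂]
        · rw [hX'other k hki hkk₂]; exact hg'q k
      obtain ⟨s', hs'F, hs'a, hs'ni⟩ := hi c' hc'inj j₁
      set r : Q → A := fun t => s' fun k => X' k t with hrdef
      have hrH : r ∈ H := hInvn s' hs'F X' hX'H
      have hrT : ∀ t ∈ T, r t = h t := by
        intro t ht
        have hni : ¬ Function.Injective (fun k => X' k t) := by
          intro hI
          apply hk₂i
          apply hI
          show X' k₂ t = X' i t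
          rw [hX'i, hX'k₂, hu'T t ht, hv'T t ht]
        rw [hrdef]
        simp only [hs'ni _ hni]
        rw [hX'i]
        exact hu'T t ht
      have hrq : r q = cv := by
        rw [hrdef]
        simp only [hX'q]
        rw [hs'a, hc'j₁]
      have hrp : r p = u' p := by
        have hni : ¬ Function.Injective (fun k => X' k p) := by
          intro hI
          apply hk₂i
          apply hI
          show X' k₂ p = X' i p
          rw [hX'i, hX'k₂, hu'v'p]
        rw [hrdef]
        simp only [hs'ni _ hni]
        rw [hX'i]
      exact ⟨r, hrH, hrT, hrp, hrq⟩
    -- Step 2b : finish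
    have hhq : h q ∈ valuesAt H q := ⟨h, hh, rfl⟩
    have hc₂ : ∃ c₂ ∈ valuesAt H q, c₂ ≠ h q ∧ c₂ ≠ b := by
      by_contra hcn
      push_neg at hcn
      have hsub : valuesAt H q ⊆ {h q, b} := by
        intro z hz
        by_cases hz1 : z = h q
        · exact Or.inl hz1
        · exact Or.inr (hcn z hz hz1)
      have h1 := Set.ncard_le_ncard hsub (Set.toFinite _)
      have h2 : ({h q, b} : Set A).ncard ≤ 2 := by
        apply le_trans (Set.ncard_insert_le _ _)
        rw [Set.ncard_singleton]
      omega
    obtain ⟨c₂, hc₂S, hc₂h, hc₂b⟩ := hc₂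
    obtain ⟨w₁, hw₁H, hw₁T, hw₁p, hw₁q⟩ := sat b hb
    obtain ⟨w₂, hw₂H, hw₂T, hw₂p, hw₂q⟩ := sat c₂ hc₂S
    obtain ⟨l₁, hl₁i, -⟩ := exists_third hn i i
    obtain ⟨l₂, hl₂i, hl₂l₁⟩ := exists_third hn i l₁
    obtain ⟨c'', hc''inj, hc''S, hc''K⟩ := ext_tuple hq {i, l₁, l₂}
      (fun k => if k = i then h q else if k = l₁ then b else c₂)
      (injOn_triple (Ne.symm hbh) (Ne.symm hc₂h) (Ne.symm hc₂b))
      (by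
        intro k hk
        split_ifs
        · exact hhq
        · exact hb
        · exact hc₂S)
    have hc''i : c'' i = h q := by rw [hc''K i (by simp)]; simp
    have hc''l₁ : c'' l₁ = b := by rw [hc''K l₁ (by simp)]; simp [hl₁i]
    have hc''l₂ : c'' l₂ = c₂ := by rw [hc''K l₂ (by simp)]; simp [hl₂i, hl₂l₁]
    choose g'' hg''H hg''T hg''q using fun k => surj (c'' k) (hc''S k)
    set X'' : Fin n → Q → A :=
      Function.update (Function.update (Function.update g'' i h) l₁ w₁) l₂ w₂ with hX''
    have hX''i : X'' i = h := by
      rw [hX'', Function.update_of_ne hl₂i.symm, Function.update_of_ne hl₁i.symm,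
        Function.update_self]
    have hX''l₁ : X'' l₁ = w₁ := by
      rw [hX'', Function.update_of_ne hl₂l₁.symm, Function.update_self]
    have hX''l₂ : X'' l₂ = w₂ := by rw [hX'', Function.update_self]
    have hX''other : ∀ k, k ≠ i → k ≠ l₁ → k ≠ l₂ → X'' k = g'' k := by
      intro k h1 h2 h3
      rw [hX'', Function.update_of_ne h3, Function.update_of_ne h2,
        Function.update_of_ne h1]
    have hX''H : ∀ k, X'' k ∈ H := by
      intro k
      by_cases h1 : k = i
      · rw [h1, hX''i]; exact hh
      by_cases h2 : k = l₁
      · rw [h2, hX''l₁]; exact hw₁H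
      by_cases h3 : k = l₂
      · rw [h3, hX''l₂]; exact hw₂H
      · rw [hX''other k h1 h2 h3]; exact hg''H k
    have hX''q : (fun k => X'' k q) = c'' := by
      funext k
      by_cases h1 : k = i
      · rw [h1, hX''i, hc''i]
      by_cases h2 : k = l₁
      · rw [h2, hX''l₁, hw₁q, hc''l₁]
      by_cases h3 : k = l₂
      · rw [h3, hX''l₂, hw₂q, hc''l₂]
      · rw [hX''other k h1 h2 h3]; exact hg''q k
    obtain ⟨s'', hs''F, hs''a, hs''ni⟩ := hi c'' hc''inj l₁
    set r' : Q → A := fun t => s'' fun k => X'' k t with hr'def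
    have hr'H : r' ∈ H := hInvn s'' hs''F X'' hX''H
    have hr'T : ∀ t ∈ T, r' t = h t := by
      intro t ht
      have hni : ¬ Function.Injective (fun k => X'' k t) := by
        intro hI
        apply hl₁i
        apply hI
        show X'' l₁ t = X'' i t
        rw [hX''i, hX''l₁, hw₁T t ht]
      rw [hr'def]
      simp only [hs''ni _ hni]
      rw [hX''i]
    have hr'q : r' q = b := by
      rw [hr'def]
      simp only [hX''q]
      rw [hs''a, hc''l₁]
    have hr'p : r' p = h p := by
      have hni : ¬ Function.Injective (fun k => X'' k p) := by
        intro hI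
        apply hl₂l₁
        apply hI
        show X'' l₂ p = X'' l₁ p
        rw [hX''l₁, hX''l₂, hw₁p, hw₂p]
      rw [hr'def]
      simp only [hs''ni _ hni]
      rw [hX''i]
    refine ⟨r', hr'H, ?_, hr'q⟩
    intro t ht
    rcases Finset.mem_insert.mp ht with rfl | ht'
    · exact hr'p
    · exact hr'T t ht'

end Aux

theorem stmt_19 {A Q : Type*} [Finite A] [Nonempty A] [Finite Q] [Nonempty Q]
    (n : ℕ) (hn : 3 ≤ n)
    (F : ∀ n : ℕ, Set ((Fin n → A) → A)) (hF : IsClone F) (hΔ : DeltaS F n)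
    (H : Set (Q → A)) :
    -- the decomposition family: singletons, pairs in [Q]^{2,0}_H, and Q^{(n)}_H
    let 𝓡 : Set (Set Q) := {R | (∃ q : Q, R = {q}) ∨
      (∃ p q : Q, p ≠ q ∧ R = {p, q} ∧ ∃ σ : Equiv.Perm A, ∀ h ∈ H, h q = σ (h p)) ∨
      R = {q : Q | (valuesAt H q).ncard < n}}
    (ClInvariant F H ↔
      (∀ R ∈ 𝓡, ClInvariant F (restrictTo R '' H)) ∧
      H = {f : Q → A | ∀ R ∈ 𝓡, restrictTo R f ∈ restrictTo R '' H}) := by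
  intro 𝓡
  classical
  obtain ⟨i, hi⟩ := hΔ
  constructor
  · intro hInv
    have hInvn : ∀ s ∈ F n, ClPreserves s H := fun s hs => hInv n s hs
    constructor
    · -- restrictions are invariant
      rintro R - m f hf hfam hmem
      choose Hk hHk hrk using hmem
      refine ⟨fun t => f fun k => Hk k t, hInv m f hf Hk hHk, ?_⟩
      funext x
      show f (fun k => Hk k ↑x) = f (fun k => hfam k x)
      congr 1
      funext k
      exact congrFun (hrk k) x
    · -- decomposability
      ext g
      simp only [Set.mem_setOf_eq]
      constructor
      · intro hgH R hR
        exact ⟨g, hgH, rfl⟩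
      · intro hg
        have hsing : ∀ t : Q, ∃ f ∈ H, f t = g t := by
          intro t
          obtain ⟨f, hf, hres⟩ := hg {t} (Or.inl ⟨t, rfl⟩)
          exact ⟨f, hf, congrFun hres ⟨t, rfl⟩⟩
        set N : Set Q := {t : Q | (valuesAt H t).ncard < n} with hN
        have hNwit : ∃ f ∈ H, ∀ t ∈ N, f t = g t := by
          obtain ⟨f, hf, hres⟩ := hg N (Or.inr (Or.inr hN))
          exact ⟨f, hf, fun t ht => congrFun hres ⟨t, ht⟩⟩
        have main : ∀ T : Finset Q, ∃ f ∈ H, ∀ t, t ∈ T ∨ t ∈ N → f t = g t := by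
          intro T
          induction T using Finset.induction_on with
          | empty =>
            obtain ⟨f, hf, hfN⟩ := hNwit
            exact ⟨f, hf, fun t ht =>
              hfN t (ht.resolve_left (Finset.notMem_empty t))⟩
          | @insert q T hqT IH =>
            obtain ⟨f, hf, hfT⟩ := IH
            by_cases hqN : q ∈ N
            · refine ⟨f, hf, fun t ht => ?_⟩
              rcases ht with ht | ht
              · rcases Finset.mem_insert.mp ht with rfl | ht'
                · exact hfT t (Or.inr hqN)
                · exact hfT t (Or.inl ht')
              · exact hfT t (Or.inr ht)
            · have hq : n ≤ (valuesAt H q).ncard := not_lt.mp hqN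
              by_cases hlink : ∃ p, (p ∈ T ∨ p ∈ N) ∧
                  ∃ σ : Equiv.Perm A, ∀ f' ∈ H, f' q = σ (f' p)
              · obtain ⟨p, hp, σ, hσ⟩ := hlink
                have hpq : p ≠ q := by
                  rintro rfl
                  rcases hp with hp | hp
                  · exact hqT hp
                  · exact hqN hp
                have hRmem : ({p, q} : Set Q) ∈ 𝓡 :=
                  Or.inr (Or.inl ⟨p, q, hpq, rfl, σ, hσ⟩)
                obtain ⟨w, hw, hres⟩ := hg {p, q} hRmem
                have hwp : w p = g p := congrFun hres ⟨p, Or.inl rfl⟩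
                have hwq : w q = g q := congrFun hres ⟨q, Or.inr rfl⟩
                have hgq : g q = σ (g p) := by
                  rw [← hwq, ← hwp]
                  exact hσ w hw
                have hfq : f q = g q := by
                  rw [hgq, ← hfT p hp]
                  exact hσ f hf
                refine ⟨f, hf, fun t ht => ?_⟩
                rcases ht with ht | ht
                · rcases Finset.mem_insert.mp ht with rfl | ht'
                  · exact hfq
                  · exact hfT t (Or.inl ht')
                · exact hfT t (Or.inr ht)
              · have hlink' : ∀ p, (p ∈ T ∨ p ∈ N) →
                    ¬ ∃ σ : Equiv.Perm A, ∀ f' ∈ H, f' q = σ (f' p) :=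
                  fun p hp hex => hlink ⟨p, hp, hex⟩
                set T' : Finset Q := T ∪ (Set.toFinite N).toFinset with hT'
                have hqT'' : q ∉ T' := by
                  rw [hT', Finset.mem_union]
                  rintro (h1 | h1)
                  · exact hqT h1
                  · exact hqN ((Set.Finite.mem_toFinset _).mp h1)
                have hunl : ∀ p ∈ T', ¬ ∃ σ : Equiv.Perm A, ∀ f' ∈ H, f' q = σ (f' p) := by
                  intro p hp
                  rw [hT', Finset.mem_union] at hp
                  rcases hp with h1 | h1
                  · exact hlink' p (Or.inl h1)
                  · exact hlink' p (Or.inr ((Set.Finite.mem_toFinset _).mp h1))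
                have hgqmem : g q ∈ valuesAt H q := by
                  obtain ⟨f', hf', hfq'⟩ := hsing q
                  exact ⟨f', hf', hfq'⟩
                obtain ⟨h', hh'H, hh'T, hh'q⟩ :=
                  lemS hn hInvn hi q hq T' hqT'' hunl f hf (g q) hgqmem
                refine ⟨h', hh'H, fun t ht => ?_⟩
                have htT' : t ∈ T' ∨ t = q := by
                  rcases ht with ht | ht
                  · rcases Finset.mem_insert.mp ht with rfl | ht'
                    · exact Or.inr rfl
                    · exact Or.inl (by rw [hT', Finset.mem_union]; exact Or.inl ht')
                  · exact Or.inl (by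
                      rw [hT', Finset.mem_union]
                      exact Or.inr ((Set.Finite.mem_toFinset _).mpr ht))
                rcases htT' with ht' | rfl
                · rw [hh'T t ht']
                  apply hfT
                  rw [hT', Finset.mem_union] at ht'
                  rcases ht' with h1 | h1
                  · exact Or.inl h1
                  · exact Or.inr ((Set.Finite.mem_toFinset _).mp h1)
                · exact hh'q
        have : Fintype Q := Fintype.ofFinite Q
        obtain ⟨f, hf, hfall⟩ := main Finset.univ
        have hfg : f = g := funext fun t => hfall t (Or.inl (Finset.mem_univ t))
        exact hfg ▸ hf
  · rintro ⟨hRinv, hdec⟩ m f hf hfam hmem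
    rw [hdec]
    intro R hR
    exact hRinv R hR m f hf (fun k => restrictTo R (hfam k))
      (fun k => ⟨hfam k, hmem k, rfl⟩)
end
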